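/- arXiv:1506.06174 — 4 statements merged into one kernel-verified Lean document; each statement's English description precedes it below -/
import Mathlib

section
/- Let (M,d,μ) be a metric probability space. Then (1/(4√6)) · sup_f ‖f(x) − f(y)‖²_{ψ₂(μ ⊗ μ)} ≤ σ²(μ) ≤ 4 · sup_f ‖f(x) − f(y)‖²_{ψ₂(μ ⊗ μ)}, where both suprema run over all functions f : M → ℝ with Lipschitz semi-norm ‖f‖_Lip ≤ 1 (no mean-zero assumption), and f(x) − f(y) is viewed as a function on the product space (M × M, μ ⊗ μ). -/
open MeasureTheory Real Filter

/-- The ψ_α Orlicz-type norm of `f` with respect to `μ`: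
`inf { r > 0 : ∫ exp((|f|/r)^α) dμ ≤ 2 }`. -/
noncomputable def psiNorm {M : Type*} [MeasurableSpace M] (μ : Measure M) (α : ℝ)
    (f : M → ℝ) : ℝ :=
  sInf {r : ℝ | 0 < r ∧ ∫ x, Real.exp ((|f x| / r) ^ α) ∂μ ≤ 2}

/-- `σ2` is an admissible subgaussian bound for the metric probability space `(M,d,μ)`:
`∫ e^{tf} dμ ≤ e^{σ2 t²/2}` for all `t ∈ ℝ` and all `f` with `μ`-mean zero and
Lipschitz semi-norm at most 1. -/
def IsSubgaussianBound {M : Type*} [PseudoMetricSpace M] [MeasurableSpace M]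
    (μ : Measure M) (σ2 : ℝ) : Prop :=
  0 ≤ σ2 ∧ ∀ f : M → ℝ, LipschitzWith 1 f → (∫ x, f x ∂μ) = 0 →
    ∀ t : ℝ, ∫ x, Real.exp (t * f x) ∂μ ≤ Real.exp (σ2 * t ^ 2 / 2)

/-- The subgaussian constant `σ²(μ)` of a metric probability space. -/
noncomputable def subgaussianConst {M : Type*} [PseudoMetricSpace M] [MeasurableSpace M]
    (μ : Measure M) : ℝ :=
  sInf {σ2 : ℝ | IsSubgaussianBound μ σ2}

/-- The normalized restricted measure `μ_A`, viewed as a measure on the metric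
(sub)space `A`. -/
noncomputable def restrictedMeasure {M : Type*} [MeasurableSpace M] (μ : Measure M)
    (A : Set M) : Measure A :=
  (ProbabilityTheory.cond μ A).comap Subtype.val

section AuxLemmas

lemma aux_abs_le_mul_exp_sq {r : ℝ} (hr : 0 < r) (u : ℝ) :
    |u| ≤ r * Real.exp ((u / r) ^ 2) := by
  have h1 : |u| / r ≤ (|u| / r) ^ 2 + 1 := by nlinarith [sq_nonneg (|u| / r - 1)]
  have h2 : (|u| / r) ^ 2 + 1 ≤ Real.exp ((|u| / r) ^ 2) := by
    have := Real.add_one_le_exp ((|u| / r) ^ 2); linarith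
  have h3 : (|u| / r) ^ 2 = (u / r) ^ 2 := by rw [div_pow, div_pow, sq_abs]
  calc |u| = r * (|u| / r) := by field_simp
    _ ≤ r * Real.exp ((u / r) ^ 2) := by
        rw [← h3]; exact mul_le_mul_of_nonneg_left (h1.trans h2) hr.le

lemma aux_mul_le_quarter {r : ℝ} (hr : 0 < r) (u w : ℝ) :
    u * w ≤ u ^ 2 * r ^ 2 / 4 + w ^ 2 / r ^ 2 := by
  obtain ⟨b, rfl⟩ : ∃ b, w = b * r := ⟨w / r, by field_simp⟩
  have h : (b * r) ^ 2 / r ^ 2 = b ^ 2 := by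
    rw [mul_pow]; field_simp
  rw [h]
  nlinarith [sq_nonneg (u * r - 2 * b), sq_nonneg r]

lemma aux_gauss_integrable (b : ℝ) {c : ℝ} (hc : 0 < c) :
    Integrable (fun z : ℝ => Real.exp (b * z - c * z ^ 2)) volume := by
  have heq : (fun z : ℝ => Real.exp (b * z - c * z ^ 2)) =
      fun z => Real.exp (b ^ 2 / (4 * c)) * Real.exp (-c * (z - b / (2 * c)) ^ 2) := by
    funext z; rw [← Real.exp_add]; congr 1; field_simp; ring
  rw [heq]
  exact (((integrable_exp_neg_mul_sq hc).comp_sub_right (b / (2 * c)))).const_mul _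

lemma aux_gauss_integral (b : ℝ) {c : ℝ} (hc : 0 < c) :
    ∫ z : ℝ, Real.exp (b * z - c * z ^ 2) =
      Real.sqrt (π / c) * Real.exp (b ^ 2 / (4 * c)) := by
  have heq : (fun z : ℝ => Real.exp (b * z - c * z ^ 2)) =
      fun z => Real.exp (b ^ 2 / (4 * c)) * Real.exp (-c * (z - b / (2 * c)) ^ 2) := by
    funext z; rw [← Real.exp_add]; congr 1; field_simp; ring
  rw [heq, MeasureTheory.integral_const_mul,
    MeasureTheory.integral_sub_right_eq_self (fun z => Real.exp (-c * z ^ 2)) (b / (2 * c)),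
    integral_gaussian]
  ring

lemma aux_lint_gauss (b : ℝ) {c : ℝ} (hc : 0 < c) :
    ∫⁻ z : ℝ, ENNReal.ofReal (Real.exp (b * z - c * z ^ 2)) =
      ENNReal.ofReal (Real.sqrt (π / c) * Real.exp (b ^ 2 / (4 * c))) := by
  rw [← aux_gauss_integral b hc,
    MeasureTheory.ofReal_integral_eq_lintegral_ofReal (aux_gauss_integrable b hc)
      (Filter.Eventually.of_forall fun z => (Real.exp_pos _).le)]

lemma aux_exp_add_exp_neg_le (x : ℝ) :
    Real.exp x + Real.exp (-x) ≤ 2 * Real.exp (x ^ 2 / 2) := by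
  have := Real.cosh_le_exp_half_sq x
  rw [Real.cosh_eq] at this; linarith

lemma aux_rpow_two (b : ℝ) : b ^ (2 : ℝ) = b ^ 2 := by
  rw [show (2 : ℝ) = ((2 : ℕ) : ℝ) by norm_num, Real.rpow_natCast]

lemma aux_slice_aemeasurable {α β : Type*} [MeasurableSpace α] [MeasurableSpace β]
    {μ : Measure α} {ν : Measure β} [SFinite ν] {G : α × β → ℝ}
    (hG : AEMeasurable G (μ.prod ν)) :
    ∀ᵐ x ∂μ, AEMeasurable (fun y => G (x, y)) ν := by
  have h2 := MeasureTheory.Measure.ae_ae_of_ae_prod hG.ae_eq_mk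
  filter_upwards [h2] with x hx
  exact ((hG.measurable_mk.comp measurable_prodMk_left).aemeasurable).congr
    (Filter.EventuallyEq.symm hx)

lemma aux_f_aemeasurable {M' : Type*} [MeasurableSpace M'] {μ : Measure M'}
    [IsProbabilityMeasure μ] {f : M' → ℝ}
    (h : ∀ᵐ x ∂μ, AEMeasurable (fun y => |f x - f y|) μ) :
    AEMeasurable f μ := by
  have hne : (ae μ).NeBot := MeasureTheory.ae_neBot.2 (IsProbabilityMeasure.ne_zero μ)
  by_cases hc : ∃ x₀ x₁, AEMeasurable (fun y => |f x₀ - f y|) μ ∧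
      AEMeasurable (fun y => |f x₁ - f y|) μ ∧ f x₀ ≠ f x₁
  · obtain ⟨x₀, x₁, h₀, h₁, hcc⟩ := hc
    classical
    set c₀ := f x₀ with hc₀
    set c₁ := f x₁ with hc₁
    set F : ℝ × ℝ → ℝ := fun p => if |c₀ + p.1 - c₁| = p.2 then c₀ + p.1 else c₀ - p.1 with hF
    have hFmeas : Measurable F := by
      apply Measurable.ite
      · exact measurableSet_eq_fun (by fun_prop) (by fun_prop)
      · fun_prop
      · fun_prop
    have hfeq : ∀ y, f y = F (|c₀ - f y|, |c₁ - f y|) := by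
      intro y
      rcases le_or_gt c₀ (f y) with hy | hy
      · have ha : |c₀ - f y| = f y - c₀ := by
          rw [abs_sub_comm]; exact abs_of_nonneg (by linarith)
        have hcond : |c₀ + (f y - c₀) - c₁| = |c₁ - f y| := by
          rw [show c₀ + (f y - c₀) - c₁ = -(c₁ - f y) by ring, abs_neg]
        simp only [hF, ha, if_pos hcond]; ring
      · have ha : |c₀ - f y| = c₀ - f y := abs_of_nonneg (by linarith)
        have hcond : ¬ (|c₀ + (c₀ - f y) - c₁| = |c₁ - f y|) := by
          intro hab
          rcases abs_eq_abs.1 hab with hh | hh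
          · exact hcc (by linarith)
          · exact absurd (by linarith : f y = c₀) (ne_of_lt hy)
        simp only [hF, ha, if_neg hcond]; ring
    have : f = fun y => F (|c₀ - f y|, |c₁ - f y|) := funext hfeq
    rw [this]
    have h₀' : AEMeasurable (fun y => |c₀ - f y|) μ := by
      refine h₀.congr (Filter.Eventually.of_forall fun y => ?_)
      rw [hc₀]
    have h₁' : AEMeasurable (fun y => |c₁ - f y|) μ := by
      refine h₁.congr (Filter.Eventually.of_forall fun y => ?_)
      rw [hc₁]
    exact hFmeas.comp_aemeasurable (h₀'.prodMk h₁')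
  · push_neg at hc
    obtain ⟨x₀, hx₀⟩ := h.exists
    have hconst : ∀ᵐ y ∂μ, f y = f x₀ := by
      filter_upwards [h] with y hy
      exact hc y x₀ hy hx₀
    exact aemeasurable_const.congr (Filter.EventuallyEq.symm hconst)

lemma aux_psi_from_mgf {Ω : Type*} [MeasurableSpace Ω] {ν : Measure Ω}
    [IsProbabilityMeasure ν] {g : Ω → ℝ} (hg : AEMeasurable g ν)
    {σ2 r : ℝ} (hσ2 : 0 ≤ σ2) (hr : 0 < r) (hr2 : 16 / 3 * σ2 ≤ r ^ 2)
    (hmgf : ∀ u : ℝ, ∫⁻ ω, ENNReal.ofReal (Real.exp (u * g ω)) ∂ν ≤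
      ENNReal.ofReal (Real.exp (σ2 * u ^ 2))) :
    ∫⁻ ω, ENNReal.ofReal (Real.exp ((g ω / r) ^ 2)) ∂ν ≤ 2 := by
  have hrne : r ≠ 0 := hr.ne'
  have hr2pos : (0:ℝ) < r ^ 2 := by positivity
  set κ : ℝ := 1 - 4 * σ2 / r ^ 2 with hκdef
  have hκ : 1 / 4 ≤ κ := by
    rw [hκdef]
    have : 4 * σ2 / r ^ 2 ≤ 3 / 4 := by
      rw [div_le_iff₀ hr2pos]; nlinarith
    linarith
  have hκpos : (0:ℝ) < κ := lt_of_lt_of_le (by norm_num) hκ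
  clear_value κ
  -- pointwise Gaussian identity
  have point : ∀ w : ℝ,
      (∫⁻ z : ℝ, (ENNReal.ofReal (Real.exp ((2 * w / r) * z - 1 * z ^ 2)) +
        ENNReal.ofReal (Real.exp (-(2 * w / r) * z - 1 * z ^ 2)))) =
      ENNReal.ofReal (2 * Real.sqrt π * Real.exp ((w / r) ^ 2)) := by
    intro w
    have hmz : Measurable fun z : ℝ =>
        ENNReal.ofReal (Real.exp ((2 * w / r) * z - 1 * z ^ 2)) := by fun_prop
    rw [lintegral_add_left' hmz.aemeasurable, aux_lint_gauss _ one_pos,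
      aux_lint_gauss _ one_pos,
      ← ENNReal.ofReal_add (by positivity) (by positivity)]
    congr 1
    have h1 : (2 * w / r) ^ 2 / (4 * 1) = (w / r) ^ 2 := by ring
    have h2 : (-(2 * w / r)) ^ 2 / (4 * 1) = (w / r) ^ 2 := by ring
    rw [h1, h2, div_one]
    ring
  -- measurability bits
  have hgf : AEMeasurable (fun p : Ω × ℝ => g p.1) (ν.prod volume) :=
    hg.comp_quasiMeasurePreserving MeasureTheory.Measure.quasiMeasurePreserving_fst
  have hH : AEMeasurable (Function.uncurry fun ω z =>
      (ENNReal.ofReal (Real.exp ((2 * g ω / r) * z - 1 * z ^ 2)) +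
        ENNReal.ofReal (Real.exp (-(2 * g ω / r) * z - 1 * z ^ 2)))) (ν.prod volume) := by
    have h1 : AEMeasurable (fun p : Ω × ℝ => 2 * g p.1 / r) (ν.prod volume) :=
      (hgf.const_mul 2).div_const r
    show AEMeasurable ((fun p : Ω × ℝ => ENNReal.ofReal (Real.exp ((2 * g p.1 / r) * p.2 - 1 * p.2 ^ 2))) +
      (fun p : Ω × ℝ => ENNReal.ofReal (Real.exp (-(2 * g p.1 / r) * p.2 - 1 * p.2 ^ 2)))) (ν.prod volume)
    apply AEMeasurable.add
    · exact ENNReal.measurable_ofReal.comp_aemeasurable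
        ((Real.measurable_exp.comp_aemeasurable
          ((h1.mul measurable_snd.aemeasurable).sub (by fun_prop))))
    · exact ENNReal.measurable_ofReal.comp_aemeasurable
        ((Real.measurable_exp.comp_aemeasurable
          ((h1.neg.mul measurable_snd.aemeasurable).sub (by fun_prop))))
  have hmeas_int : AEMeasurable (fun ω => ENNReal.ofReal (Real.exp ((g ω / r) ^ 2))) ν := by
    fun_prop
  -- the per-z bound
  have step3 : ∀ z : ℝ,
      (∫⁻ ω, (ENNReal.ofReal (Real.exp ((2 * g ω / r) * z - 1 * z ^ 2)) +
        ENNReal.ofReal (Real.exp (-(2 * g ω / r) * z - 1 * z ^ 2))) ∂ν) ≤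
      ENNReal.ofReal 2 * ENNReal.ofReal (Real.exp (0 * z - κ * z ^ 2)) := by
    intro z
    have e1 : ∀ ω, (2 * g ω / r) * z - 1 * z ^ 2 = -z ^ 2 + (2 * z / r) * g ω := by
      intro ω; field_simp; ring
    have e2 : ∀ ω, -(2 * g ω / r) * z - 1 * z ^ 2 = -z ^ 2 + (-(2 * z / r)) * g ω := by
      intro ω; field_simp; ring
    have hrw : (fun ω => (ENNReal.ofReal (Real.exp ((2 * g ω / r) * z - 1 * z ^ 2)) +
        ENNReal.ofReal (Real.exp (-(2 * g ω / r) * z - 1 * z ^ 2)))) =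
        fun ω => ENNReal.ofReal (Real.exp (-z ^ 2)) *
          (ENNReal.ofReal (Real.exp ((2 * z / r) * g ω)) +
           ENNReal.ofReal (Real.exp ((-(2 * z / r)) * g ω))) := by
      funext ω
      rw [e1, e2, Real.exp_add, Real.exp_add, ENNReal.ofReal_mul (Real.exp_pos _).le,
        ENNReal.ofReal_mul (Real.exp_pos _).le, mul_add]
    rw [hrw]
    have hmm : AEMeasurable (fun ω => ENNReal.ofReal (Real.exp ((2 * z / r) * g ω)) +
        ENNReal.ofReal (Real.exp ((-(2 * z / r)) * g ω))) ν := by fun_prop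
    rw [lintegral_const_mul'' _ hmm, lintegral_add_left' (by fun_prop) _]
    have hb : (∫⁻ ω, ENNReal.ofReal (Real.exp ((2 * z / r) * g ω)) ∂ν) +
        (∫⁻ ω, ENNReal.ofReal (Real.exp ((-(2 * z / r)) * g ω)) ∂ν) ≤
        ENNReal.ofReal (2 * Real.exp (σ2 * (2 * z / r) ^ 2)) := by
      have h1 := hmgf (2 * z / r)
      have h2 := hmgf (-(2 * z / r))
      have hsq : (-(2 * z / r)) ^ 2 = (2 * z / r) ^ 2 := by ring
      rw [hsq] at h2
      calc _ ≤ ENNReal.ofReal (Real.exp (σ2 * (2 * z / r) ^ 2)) +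
            ENNReal.ofReal (Real.exp (σ2 * (2 * z / r) ^ 2)) := add_le_add h1 h2
        _ = ENNReal.ofReal (2 * Real.exp (σ2 * (2 * z / r) ^ 2)) := by
            rw [← ENNReal.ofReal_add (by positivity) (by positivity)]; congr 1; ring
    calc ENNReal.ofReal (Real.exp (-z ^ 2)) * _ ≤ ENNReal.ofReal (Real.exp (-z ^ 2)) *
          ENNReal.ofReal (2 * Real.exp (σ2 * (2 * z / r) ^ 2)) := by
          exact mul_le_mul_right hb _
      _ = ENNReal.ofReal 2 * ENNReal.ofReal (Real.exp (0 * z - κ * z ^ 2)) := by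
          rw [← ENNReal.ofReal_mul (Real.exp_pos _).le, ← ENNReal.ofReal_mul (by norm_num)]
          congr 1
          have heq : -z ^ 2 + σ2 * (2 * z / r) ^ 2 = 0 * z - κ * z ^ 2 := by
            rw [hκdef]; field_simp; ring
          have h' : Real.exp (-z ^ 2) * Real.exp (σ2 * (2 * z / r) ^ 2) =
              Real.exp (0 * z - κ * z ^ 2) := by rw [← Real.exp_add, heq]
          calc Real.exp (-z ^ 2) * (2 * Real.exp (σ2 * (2 * z / r) ^ 2))
              = 2 * (Real.exp (-z ^ 2) * Real.exp (σ2 * (2 * z / r) ^ 2)) := by ring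
            _ = 2 * Real.exp (0 * z - κ * z ^ 2) := by rw [h']
  -- main chain
  have key : ENNReal.ofReal (2 * Real.sqrt π) *
      (∫⁻ ω, ENNReal.ofReal (Real.exp ((g ω / r) ^ 2)) ∂ν) ≤
      ENNReal.ofReal (2 * Real.sqrt (π / κ)) := by
    calc ENNReal.ofReal (2 * Real.sqrt π) * (∫⁻ ω, ENNReal.ofReal (Real.exp ((g ω / r) ^ 2)) ∂ν)
        = ∫⁻ ω, ENNReal.ofReal (2 * Real.sqrt π) * ENNReal.ofReal (Real.exp ((g ω / r) ^ 2)) ∂ν := (lintegral_const_mul'' _ hmeas_int).symm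
      _ = ∫⁻ ω, (∫⁻ z : ℝ, (ENNReal.ofReal (Real.exp ((2 * g ω / r) * z - 1 * z ^ 2)) +
            ENNReal.ofReal (Real.exp (-(2 * g ω / r) * z - 1 * z ^ 2))) ∂volume) ∂ν := by
          congr 1; funext ω
          rw [point (g ω), ← ENNReal.ofReal_mul (by positivity)]
      _ = ∫⁻ z : ℝ, (∫⁻ ω, (ENNReal.ofReal (Real.exp ((2 * g ω / r) * z - 1 * z ^ 2)) +
            ENNReal.ofReal (Real.exp (-(2 * g ω / r) * z - 1 * z ^ 2))) ∂ν) ∂volume :=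
          lintegral_lintegral_swap hH
      _ ≤ ∫⁻ z : ℝ, ENNReal.ofReal 2 * ENNReal.ofReal (Real.exp (0 * z - κ * z ^ 2)) ∂volume :=
          lintegral_mono step3
      _ = ENNReal.ofReal 2 * ∫⁻ z : ℝ, ENNReal.ofReal (Real.exp (0 * z - κ * z ^ 2)) ∂volume := by
          rw [lintegral_const_mul'' _ (by fun_prop)]
      _ = ENNReal.ofReal 2 * ENNReal.ofReal (Real.sqrt (π / κ) * Real.exp (0 ^ 2 / (4 * κ))) := by
          rw [aux_lint_gauss 0 hκpos]
      _ = ENNReal.ofReal (2 * Real.sqrt (π / κ)) := by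
          rw [← ENNReal.ofReal_mul (by norm_num)]
          congr 1
          norm_num [Real.exp_zero]
  have hbound : ENNReal.ofReal (2 * Real.sqrt (π / κ)) ≤
      ENNReal.ofReal (2 * Real.sqrt π) * 2 := by
    rw [show (2 : ENNReal) = ENNReal.ofReal 2 by simp, ← ENNReal.ofReal_mul (by positivity)]
    apply ENNReal.ofReal_le_ofReal
    have h4 : π / κ ≤ 4 * π := by
      rw [div_le_iff₀ hκpos]
      have h5 := mul_le_mul_of_nonneg_left hκ (show (0:ℝ) ≤ 4 * π by positivity)
      linarith
    have : Real.sqrt (π / κ) ≤ Real.sqrt (4 * π) := Real.sqrt_le_sqrt h4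
    have h42 : Real.sqrt (4 * π) = 2 * Real.sqrt π := by
      rw [show (4:ℝ) = 2 ^ 2 by norm_num, Real.sqrt_mul (by positivity), Real.sqrt_sq (by norm_num)]
    nlinarith [this, h42]
  have hne0 : ENNReal.ofReal (2 * Real.sqrt π) ≠ 0 := by
    simp only [ne_eq, ENNReal.ofReal_eq_zero, not_le]
    positivity
  have hnetop : ENNReal.ofReal (2 * Real.sqrt π) ≠ ⊤ := ENNReal.ofReal_ne_top
  exact (ENNReal.mul_le_mul_iff_right hne0 hnetop).1 (key.trans hbound)

lemma aux_lemmaL {M : Type*} [MetricSpace M] [MeasurableSpace M] (μ : Measure M)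
    [IsProbabilityMeasure μ] {f : M → ℝ} (hf : LipschitzWith 1 f) {σ2 : ℝ}
    (hσ : IsSubgaussianBound μ σ2) :
    psiNorm (μ.prod μ) 2 (fun p : M × M => f p.1 - f p.2) ^ 2 ≤ 16 / 3 * σ2 := by
  classical
  set ν := μ.prod μ with hν
  set g : M × M → ℝ := fun p => f p.1 - f p.2 with hg
  set S : Set ℝ := {r : ℝ | 0 < r ∧ ∫ p, Real.exp ((|g p| / r) ^ (2:ℝ)) ∂ν ≤ 2} with hS
  have hρdef : psiNorm ν 2 g = sInf S := rfl
  set ρ := psiNorm ν 2 g with hρ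
  have hρ0 : 0 ≤ ρ := Real.sInf_nonneg fun x hx => hx.1.le
  have hσ2 : 0 ≤ σ2 := hσ.1
  by_contra hlt
  push_neg at hlt
  have hsq : Real.sqrt (16 / 3 * σ2) < ρ := by
    have h1 : Real.sqrt (16 / 3 * σ2) < Real.sqrt (ρ ^ 2) :=
      Real.sqrt_lt_sqrt (by positivity) hlt
    rwa [Real.sqrt_sq hρ0] at h1
  have hρpos : 0 < ρ := lt_of_le_of_lt (Real.sqrt_nonneg _) hsq
  set r : ℝ := (Real.sqrt (16 / 3 * σ2) + ρ) / 2 with hr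
  have hr0 : 0 < r := by
    have := Real.sqrt_nonneg (16 / 3 * σ2); rw [hr]; linarith
  have hrρ : r < ρ := by rw [hr]; linarith
  have hr16 : 16 / 3 * σ2 ≤ r ^ 2 := by
    have h1 : Real.sqrt (16 / 3 * σ2) ≤ r := by rw [hr]; linarith [Real.sqrt_nonneg (16/3*σ2)]
    calc 16 / 3 * σ2 = Real.sqrt (16 / 3 * σ2) ^ 2 := (Real.sq_sqrt (by positivity)).symm
      _ ≤ r ^ 2 := by nlinarith [Real.sqrt_nonneg (16 / 3 * σ2)]
  clear_value ρ
  clear_value r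
  -- r is not in the defining set
  have hrS : r ∉ S := by
    intro hmem
    have : ρ ≤ r := by
      rw [hρdef]; exact csInf_le ⟨0, fun x hx => hx.1.le⟩ hmem
    linarith
  have hI : 2 < ∫ p, Real.exp ((|g p| / r) ^ (2:ℝ)) ∂ν := by
    by_contra h
    push_neg at h
    exact hrS ⟨hr0, h⟩
  -- rewrite rpow as a square
  have hfun : (fun p => Real.exp ((|g p| / r) ^ (2:ℝ))) =
      fun p => Real.exp ((g p / r) ^ 2) := by
    funext p
    rw [aux_rpow_two, div_pow, div_pow, sq_abs]
  rw [hfun] at hI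
  set E : M × M → ℝ := fun p => Real.exp ((g p / r) ^ 2) with hE
  have hInt : Integrable E ν := by
    by_contra h
    rw [integral_undef h] at hI
    norm_num at hI
  have hEm : AEMeasurable E ν := hInt.aestronglyMeasurable.aemeasurable
  -- |g| is a.e. measurable
  have hGabs : AEMeasurable (fun p => |g p|) ν := by
    have hm : AEMeasurable (fun p => r * Real.sqrt (Real.log (E p))) ν :=
      ((Real.continuous_sqrt.measurable.comp Real.measurable_log).comp_aemeasurable hEm).const_mul r
    refine hm.congr (Filter.Eventually.of_forall fun p => ?_)
    rw [hE]
    simp only [Real.log_exp, Real.sqrt_sq_eq_abs, abs_div, abs_of_pos hr0]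
    field_simp
  have hslice := aux_slice_aemeasurable (μ := μ) (ν := μ) (G := fun p => |g p|) hGabs
  have hfm : AEMeasurable f μ := by
    apply aux_f_aemeasurable
    filter_upwards [hslice] with x hx
    exact hx
  -- finiteness of slices
  have hEl : ∫⁻ p, ENNReal.ofReal (E p) ∂ν ≠ ⊤ := by
    rw [← ofReal_integral_eq_lintegral_ofReal hInt
      (Filter.Eventually.of_forall fun p => (Real.exp_pos _).le)]
    exact ENNReal.ofReal_ne_top
  have hElprod : ∫⁻ x, (∫⁻ y, ENNReal.ofReal (E (x, y)) ∂μ) ∂μ ≠ ⊤ := by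
    have hEo : AEMeasurable (fun p : M × M => ENNReal.ofReal (E p)) ν :=
      ENNReal.measurable_ofReal.comp_aemeasurable hEm
    rw [← MeasureTheory.lintegral_prod _ hEo]
    exact hEl
  have hinnerm : AEMeasurable (fun x => ∫⁻ y, ENNReal.ofReal (E (x, y)) ∂μ) μ := by
    have hF : AEMeasurable (fun p => ENNReal.ofReal (E p)) (μ.prod μ) :=
      ENNReal.measurable_ofReal.comp_aemeasurable hEm
    have hsl := MeasureTheory.Measure.ae_ae_of_ae_prod (μ := μ) (ν := μ) hF.ae_eq_mk
    refine (Measurable.lintegral_prod_right' (ν := μ) (f := hF.mk _) hF.measurable_mk).aemeasurable.congr ?_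
    filter_upwards [hsl] with x hx
    exact lintegral_congr_ae (Filter.EventuallyEq.symm hx)
  have hfin : ∀ᵐ x ∂μ, (∫⁻ y, ENNReal.ofReal (E (x, y)) ∂μ) < ⊤ :=
    MeasureTheory.ae_lt_top' hinnerm hElprod
  have hne : (ae μ).NeBot := MeasureTheory.ae_neBot.2 (IsProbabilityMeasure.ne_zero μ)
  obtain ⟨x₀, hx₀fin⟩ := hfin.exists
  -- integrability of the slice exp function
  set φ : M → ℝ := fun y => Real.exp (((f x₀ - f y) / r) ^ 2) with hφ
  have hφm : AEMeasurable φ μ := by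
    apply Real.measurable_exp.comp_aemeasurable
    exact ((aemeasurable_const.sub hfm).div_const r).pow_const 2
  have hφInt : Integrable φ μ := by
    refine ⟨hφm.aestronglyMeasurable, ?_⟩
    rw [hasFiniteIntegral_iff_ofReal (Filter.Eventually.of_forall fun y => (Real.exp_pos _).le)]
    have : (fun y => ENNReal.ofReal (φ y)) = fun y => ENNReal.ofReal (E (x₀, y)) := by
      funext y; rfl
    rw [this]
    exact hx₀fin
  -- integrability of f
  have hfInt : Integrable f μ := by
    refine Integrable.mono' ((hφInt.const_mul r).add (integrable_const |f x₀|)) hfm.aestronglyMeasurable ?_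
    filter_upwards with y
    have h1 : |f x₀ - f y| ≤ r * φ y := aux_abs_le_mul_exp_sq hr0 (f x₀ - f y)
    have h2 : |f y| ≤ |f x₀| + |f x₀ - f y| := by
      have hh := abs_sub_abs_le_abs_sub (f y) (f x₀)
      have hh' : |f y - f x₀| = |f x₀ - f y| := abs_sub_comm _ _
      linarith
    calc ‖f y‖ = |f y| := rfl
      _ ≤ |f x₀| + r * φ y := by linarith
      _ = r * φ y + |f x₀| := by ring
  set c : ℝ := ∫ y, f y ∂μ with hc
  set ft : M → ℝ := fun y => f y - c with hft
  have hftLip : LipschitzWith 1 ft := by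
    intro a b
    have : edist (ft a) (ft b) = edist (f a) (f b) := edist_sub_right _ _ _
    rw [this]
    exact hf a b
  have hftmean : ∫ y, ft y ∂μ = 0 := by
    rw [hft]
    rw [integral_sub hfInt (integrable_const c), integral_const]
    simp [measure_univ, hc]
  have hftm : AEMeasurable ft μ := hfm.sub aemeasurable_const
  -- integrability of exp (u * ft)
  have hexpInt : ∀ u : ℝ, Integrable (fun y => Real.exp (u * ft y)) μ := by
    intro u
    set K : ℝ := |u| * |f x₀ - c| + u ^ 2 * r ^ 2 / 4 with hK
    refine Integrable.mono' (hφInt.const_mul (Real.exp K))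
      (Real.measurable_exp.comp_aemeasurable (hftm.const_mul u)).aestronglyMeasurable ?_
    filter_upwards with y
    have h0 : u * ft y ≤ |u| * |ft y| := by
      calc u * ft y ≤ |u * ft y| := le_abs_self _
        _ = |u| * |ft y| := abs_mul _ _
    have h1 : |ft y| ≤ |f x₀ - c| + |f x₀ - f y| := by
      have heq : ft y = (f x₀ - c) - (f x₀ - f y) := by rw [hft]; ring
      calc |ft y| = |(f x₀ - c) - (f x₀ - f y)| := by rw [heq]
        _ ≤ |f x₀ - c| + |f x₀ - f y| := abs_sub _ _
    have h2 : |u| * |f x₀ - f y| ≤ u ^ 2 * r ^ 2 / 4 + ((f x₀ - f y) / r) ^ 2 := by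
      have := aux_mul_le_quarter hr0 |u| |f x₀ - f y|
      calc |u| * |f x₀ - f y| ≤ |u| ^ 2 * r ^ 2 / 4 + |f x₀ - f y| ^ 2 / r ^ 2 := this
        _ = u ^ 2 * r ^ 2 / 4 + ((f x₀ - f y) / r) ^ 2 := by
            rw [sq_abs, sq_abs, div_pow]
    have h3 : u * ft y ≤ K + ((f x₀ - f y) / r) ^ 2 := by
      have hmul : |u| * |ft y| ≤ |u| * (|f x₀ - c| + |f x₀ - f y|) :=
        mul_le_mul_of_nonneg_left h1 (abs_nonneg u)
      rw [hK]
      calc u * ft y ≤ |u| * |ft y| := h0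
        _ ≤ |u| * |f x₀ - c| + |u| * |f x₀ - f y| := by rw [mul_add] at hmul; linarith
        _ ≤ |u| * |f x₀ - c| + (u ^ 2 * r ^ 2 / 4 + ((f x₀ - f y) / r) ^ 2) := by linarith
        _ = _ := by ring
    calc ‖Real.exp (u * ft y)‖ = Real.exp (u * ft y) := Real.norm_of_nonneg (Real.exp_pos _).le
      _ ≤ Real.exp (K + ((f x₀ - f y) / r) ^ 2) := Real.exp_le_exp.2 h3
      _ = Real.exp K * φ y := by rw [Real.exp_add]
  -- the one-variable mgf bound
  have hmgfμ : ∀ u : ℝ, ∫⁻ y, ENNReal.ofReal (Real.exp (u * ft y)) ∂μ ≤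
      ENNReal.ofReal (Real.exp (σ2 * u ^ 2 / 2)) := by
    intro u
    rw [← ofReal_integral_eq_lintegral_ofReal (hexpInt u)
      (Filter.Eventually.of_forall fun y => (Real.exp_pos _).le)]
    exact ENNReal.ofReal_le_ofReal (hσ.2 ft hftLip hftmean u)
  -- the product mgf bound
  have hmgfν : ∀ u : ℝ, ∫⁻ p, ENNReal.ofReal (Real.exp (u * g p)) ∂ν ≤
      ENNReal.ofReal (Real.exp (σ2 * u ^ 2)) := by
    intro u
    have hsplit : (fun p : M × M => ENNReal.ofReal (Real.exp (u * g p))) =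
        fun p => ENNReal.ofReal (Real.exp (u * ft p.1)) *
          ENNReal.ofReal (Real.exp ((-u) * ft p.2)) := by
      funext p
      rw [← ENNReal.ofReal_mul (Real.exp_pos _).le, ← Real.exp_add]
      congr 2
      rw [hg, hft]; ring
    have hA : AEMeasurable (fun x => ENNReal.ofReal (Real.exp (u * ft x))) μ :=
      ENNReal.measurable_ofReal.comp_aemeasurable
        (Real.measurable_exp.comp_aemeasurable (hftm.const_mul u))
    have hB : AEMeasurable (fun x => ENNReal.ofReal (Real.exp ((-u) * ft x))) μ :=
      ENNReal.measurable_ofReal.comp_aemeasurable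
        (Real.measurable_exp.comp_aemeasurable (hftm.const_mul (-u)))
    rw [hsplit, hν, MeasureTheory.lintegral_prod_mul hA hB]
    calc _ ≤ ENNReal.ofReal (Real.exp (σ2 * u ^ 2 / 2)) *
          ENNReal.ofReal (Real.exp (σ2 * (-u) ^ 2 / 2)) :=
        mul_le_mul' (hmgfμ u) (hmgfμ (-u))
      _ = ENNReal.ofReal (Real.exp (σ2 * u ^ 2)) := by
        rw [← ENNReal.ofReal_mul (Real.exp_pos _).le, ← Real.exp_add]
        congr 2
        ring
  -- apply the key lemma
  have hgm : AEMeasurable g ν := by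
    have h1 : AEMeasurable (fun p : M × M => f p.1) ν :=
      hfm.comp_quasiMeasurePreserving MeasureTheory.Measure.quasiMeasurePreserving_fst
    have h2 : AEMeasurable (fun p : M × M => f p.2) ν :=
      hfm.comp_quasiMeasurePreserving MeasureTheory.Measure.quasiMeasurePreserving_snd
    exact h1.sub h2
  have hkey := aux_psi_from_mgf hgm hσ2 hr0 hr16 hmgfν
  -- contradiction
  have hfinal : ENNReal.ofReal (∫ p, E p ∂ν) ≤ ENNReal.ofReal 2 := by
    rw [ofReal_integral_eq_lintegral_ofReal hInt
      (Filter.Eventually.of_forall fun p => (Real.exp_pos _).le)]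
    calc _ ≤ (2 : ENNReal) := hkey
      _ = ENNReal.ofReal 2 := by norm_num
  have : ∫ p, E p ∂ν ≤ 2 := by
    have := (ENNReal.ofReal_le_ofReal_iff (by norm_num)).1 hfinal
    exact this
  linarith

lemma aux_psiNorm_zero_sq {Ω : Type*} [MeasurableSpace Ω] (ν : Measure Ω)
    [IsProbabilityMeasure ν] :
    psiNorm ν 2 (fun _ : Ω => (0:ℝ) - 0) = 0 := by
  unfold psiNorm
  have hset : {r : ℝ | 0 < r ∧ ∫ _x : Ω, Real.exp ((|(0:ℝ) - 0| / r) ^ (2:ℝ)) ∂ν ≤ 2} =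
      Set.Ioi 0 := by
    ext r
    simp only [Set.mem_setOf_eq, Set.mem_Ioi, sub_zero, abs_zero, zero_div,
      Real.zero_rpow (two_ne_zero), Real.exp_zero, integral_const, measure_univ,
      ENNReal.toReal_one, probReal_univ, smul_eq_mul, one_mul]
    constructor
    · exact fun h => h.1
    · exact fun h => ⟨h, by norm_num⟩
  rw [hset, csInf_Ioi]

set_option maxHeartbeats 1000000 in
lemma aux_lemmaU {M : Type*} [MetricSpace M] [MeasurableSpace M] (μ : Measure M)
    [IsProbabilityMeasure μ]
    (hBdd : BddAbove {v : ℝ | ∃ f : M → ℝ, LipschitzWith 1 f ∧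
      v = psiNorm (μ.prod μ) 2 (fun p : M × M => f p.1 - f p.2) ^ 2}) :
    IsSubgaussianBound μ (4 * sSup {v : ℝ | ∃ f : M → ℝ, LipschitzWith 1 f ∧
      v = psiNorm (μ.prod μ) 2 (fun p : M × M => f p.1 - f p.2) ^ 2}) := by
  classical
  set Sv : Set ℝ := {v : ℝ | ∃ f : M → ℝ, LipschitzWith 1 f ∧
      v = psiNorm (μ.prod μ) 2 (fun p : M × M => f p.1 - f p.2) ^ 2} with hSv
  set s := sSup Sv with hs
  have h0mem : (0:ℝ) ∈ Sv := by
    refine ⟨fun _ => 0, (LipschitzWith.const 0).weaken zero_le_one, ?_⟩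
    rw [aux_psiNorm_zero_sq (μ.prod μ)]
    norm_num
  have hs0 : 0 ≤ s := le_csSup hBdd h0mem
  refine ⟨by positivity, ?_⟩
  intro f hf hf0 t
  by_cases hIntf : Integrable (fun x => Real.exp (t * f x)) μ
  swap
  · rw [integral_undef hIntf]; positivity
  by_cases ht : t = 0
  · subst ht; simp [measure_univ]
  -- f is a.e. measurable
  have hfm : AEMeasurable f μ := by
    have h1 : AEMeasurable (fun x => Real.exp (t * f x)) μ :=
      hIntf.aestronglyMeasurable.aemeasurable
    have h2 : AEMeasurable (fun x => Real.log (Real.exp (t * f x)) / t) μ :=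
      (Real.measurable_log.comp_aemeasurable h1).div_const t
    refine h2.congr (Filter.Eventually.of_forall fun x => ?_)
    simp only [Real.log_exp]
    rw [mul_comm, mul_div_assoc, div_self ht, mul_one]
  set g : M × M → ℝ := fun p => f p.1 - f p.2 with hg
  have hgm : AEMeasurable g (μ.prod μ) :=
    (hfm.comp_quasiMeasurePreserving MeasureTheory.Measure.quasiMeasurePreserving_fst).sub
      (hfm.comp_quasiMeasurePreserving MeasureTheory.Measure.quasiMeasurePreserving_snd)
  -- clamped functions
  set fN : ℕ → M → ℝ := fun N x => max (-(N:ℝ)) (min (N:ℝ) (f x)) with hfN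
  have hLipN : ∀ N, LipschitzWith 1 (fN N) := by
    intro N
    have hEq : fN N = fun x => max (min (f x) (N:ℝ)) (-(N:ℝ)) := by
      funext x; simp only [hfN]; rw [min_comm, max_comm]
    rw [hEq]
    exact (hf.min_const _).max_const _
  have hfNm : ∀ N, AEMeasurable (fN N) μ := by
    intro N
    exact aemeasurable_const.max (aemeasurable_const.min hfm)
  have hbdN : ∀ (N : ℕ) (x : M), |fN N x| ≤ (N:ℝ) := by
    intro N x
    have hN0 : (0:ℝ) ≤ (N:ℝ) := Nat.cast_nonneg N
    rw [abs_le]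
    constructor
    · simp only [hfN]; exact le_max_left _ _
    · simp only [hfN]
      apply max_le
      · linarith
      · exact min_le_left _ _
  have hgNm : ∀ N, AEMeasurable (fun p : M × M => fN N p.1 - fN N p.2) (μ.prod μ) := by
    intro N
    exact ((hfNm N).comp_quasiMeasurePreserving
        MeasureTheory.Measure.quasiMeasurePreserving_fst).sub
      ((hfNm N).comp_quasiMeasurePreserving MeasureTheory.Measure.quasiMeasurePreserving_snd)
  have habsN : ∀ (N : ℕ) (p : M × M), |fN N p.1 - fN N p.2| ≤ 2 * N := by
    intro N p
    calc |fN N p.1 - fN N p.2| ≤ |fN N p.1| + |fN N p.2| := abs_sub _ _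
      _ ≤ (N:ℝ) + N := add_le_add (hbdN N p.1) (hbdN N p.2)
      _ = 2 * N := by ring
  -- Claim 1
  have claim1 : ∀ r : ℝ, Real.sqrt s < r → ∀ N : ℕ,
      ∫⁻ p, ENNReal.ofReal (Real.exp (((fN N p.1 - fN N p.2) / r) ^ 2)) ∂(μ.prod μ) ≤ 2 := by
    intro r hr N
    have hrpos : 0 < r := lt_of_le_of_lt (Real.sqrt_nonneg s) hr
    set SN := {r' : ℝ | 0 < r' ∧
      ∫ p, Real.exp ((|fN N p.1 - fN N p.2| / r') ^ (2:ℝ)) ∂(μ.prod μ) ≤ 2} with hSN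
    have hρNdef : psiNorm (μ.prod μ) 2 (fun p : M × M => fN N p.1 - fN N p.2) = sInf SN := rfl
    have hmemSv : psiNorm (μ.prod μ) 2 (fun p : M × M => fN N p.1 - fN N p.2) ^ 2 ∈ Sv :=
      ⟨fN N, hLipN N, rfl⟩
    have hvN : psiNorm (μ.prod μ) 2 (fun p : M × M => fN N p.1 - fN N p.2) ^ 2 ≤ s :=
      le_csSup hBdd hmemSv
    have hρN0 : 0 ≤ psiNorm (μ.prod μ) 2 (fun p : M × M => fN N p.1 - fN N p.2) :=
      Real.sInf_nonneg fun x hx => hx.1.le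
    have hρNr : sInf SN < r := by
      rw [← hρNdef]
      have h1 : psiNorm (μ.prod μ) 2 (fun p : M × M => fN N p.1 - fN N p.2) ≤ Real.sqrt s :=
        (Real.le_sqrt hρN0 hs0).2 hvN
      linarith
    -- SN is nonempty
    have hlog2 : 0 < Real.log 2 := Real.log_pos (by norm_num)
    set r₀ : ℝ := (2 * (N:ℝ) + 1) / Real.sqrt (Real.log 2) with hr₀def
    have hr₀pos : 0 < r₀ := by
      rw [hr₀def]; positivity
    have hSNne : r₀ ∈ SN := by
      refine ⟨hr₀pos, ?_⟩
      have hrw : (fun p : M × M => Real.exp ((|fN N p.1 - fN N p.2| / r₀) ^ (2:ℝ))) =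
          fun p => Real.exp ((|fN N p.1 - fN N p.2| / r₀) ^ 2) :=
        funext fun p => by rw [aux_rpow_two]
      rw [hrw]
      have hpt : ∀ p : M × M, Real.exp ((|fN N p.1 - fN N p.2| / r₀) ^ 2) ≤ 2 := by
        intro p
        have h1 : |fN N p.1 - fN N p.2| / r₀ ≤ Real.sqrt (Real.log 2) := by
          rw [div_le_iff₀ hr₀pos, hr₀def]
          have hss : Real.sqrt (Real.log 2) * ((2 * (N:ℝ) + 1) / Real.sqrt (Real.log 2)) =
              2 * (N:ℝ) + 1 := by
            field_simp
          rw [hss]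
          linarith [habsN N p]
        have h2 : (|fN N p.1 - fN N p.2| / r₀) ^ 2 ≤ Real.log 2 := by
          have h0 : 0 ≤ |fN N p.1 - fN N p.2| / r₀ := by positivity
          nlinarith [Real.sq_sqrt hlog2.le]
        calc Real.exp ((|fN N p.1 - fN N p.2| / r₀) ^ 2) ≤ Real.exp (Real.log 2) :=
            Real.exp_le_exp.2 h2
          _ = 2 := Real.exp_log (by norm_num)
      have hm : AEMeasurable (fun p : M × M =>
          Real.exp ((|fN N p.1 - fN N p.2| / r₀) ^ 2)) (μ.prod μ) :=
        Real.measurable_exp.comp_aemeasurable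
          (((continuous_abs.measurable.comp_aemeasurable (hgNm N)).div_const r₀).pow_const 2)
      have hint : Integrable (fun p : M × M =>
          Real.exp ((|fN N p.1 - fN N p.2| / r₀) ^ 2)) (μ.prod μ) := by
        refine Integrable.mono' (integrable_const 2) hm.aestronglyMeasurable ?_
        filter_upwards with p
        rw [Real.norm_of_nonneg (Real.exp_pos _).le]
        exact hpt p
      calc ∫ p, Real.exp ((|fN N p.1 - fN N p.2| / r₀) ^ 2) ∂(μ.prod μ) ≤
          ∫ _p, (2:ℝ) ∂(μ.prod μ) := integral_mono hint (integrable_const 2) hpt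
        _ = 2 := by simp [measure_univ]
    obtain ⟨r', hr'mem, hr'lt⟩ := exists_lt_of_csInf_lt ⟨r₀, hSNne⟩ hρNr
    obtain ⟨hr'0, hr'int⟩ := hr'mem
    have hrw' : (fun p : M × M => Real.exp ((|fN N p.1 - fN N p.2| / r') ^ (2:ℝ))) =
        fun p => Real.exp (((fN N p.1 - fN N p.2) / r') ^ 2) :=
      funext fun p => by rw [aux_rpow_two, div_pow, div_pow, sq_abs]
    rw [hrw'] at hr'int
    have hIntr' : Integrable
        (fun p : M × M => Real.exp (((fN N p.1 - fN N p.2) / r') ^ 2)) (μ.prod μ) := by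
      refine Integrable.mono' (integrable_const (Real.exp ((2 * (N:ℝ) / r') ^ 2)))
        (Real.measurable_exp.comp_aemeasurable
          (((hgNm N).div_const r').pow_const 2)).aestronglyMeasurable ?_
      filter_upwards with p
      rw [Real.norm_of_nonneg (Real.exp_pos _).le]
      apply Real.exp_le_exp.2
      rw [div_pow, div_pow]
      have hd := abs_le.1 (habsN N p)
      have hnum : (fN N p.1 - fN N p.2) ^ 2 ≤ (2 * (N:ℝ)) ^ 2 := sq_le_sq' hd.1 hd.2
      exact (div_le_div_iff_of_pos_right (by positivity)).2 hnum
    have hlintr' : ∫⁻ p, ENNReal.ofReal (Real.exp (((fN N p.1 - fN N p.2) / r') ^ 2))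
        ∂(μ.prod μ) ≤ 2 := by
      rw [← ofReal_integral_eq_lintegral_ofReal hIntr'
        (Filter.Eventually.of_forall fun p => (Real.exp_pos _).le)]
      calc ENNReal.ofReal (∫ p, Real.exp (((fN N p.1 - fN N p.2) / r') ^ 2) ∂(μ.prod μ)) ≤
          ENNReal.ofReal 2 := ENNReal.ofReal_le_ofReal hr'int
        _ = 2 := by norm_num
    refine le_trans (lintegral_mono fun p => ?_) hlintr'
    apply ENNReal.ofReal_le_ofReal
    apply Real.exp_le_exp.2
    rw [div_pow, div_pow]
    exact div_le_div_of_nonneg_left (by positivity) (by positivity)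
      (by nlinarith [hr'lt, hr'0])
  -- Claim 2 : monotone limit
  have claim2 : ∀ r : ℝ, Real.sqrt s < r →
      ∫⁻ p, ENNReal.ofReal (Real.exp ((g p / r) ^ 2)) ∂(μ.prod μ) ≤ 2 := by
    intro r hr
    have hmeasN : ∀ N : ℕ, AEMeasurable (fun p : M × M =>
        ENNReal.ofReal (Real.exp (((fN N p.1 - fN N p.2) / r) ^ 2))) (μ.prod μ) := fun N =>
      ENNReal.measurable_ofReal.comp_aemeasurable
        (Real.measurable_exp.comp_aemeasurable (((hgNm N).div_const r).pow_const 2))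
    have hptlim : ∀ p : M × M,
        Filter.Tendsto (fun N : ℕ => ENNReal.ofReal (Real.exp (((fN N p.1 - fN N p.2) / r) ^ 2)))
          atTop (nhds (ENNReal.ofReal (Real.exp ((g p / r) ^ 2)))) := by
      intro p
      have hev : (fun _ : ℕ => ENNReal.ofReal (Real.exp ((g p / r) ^ 2))) =ᶠ[atTop]
          (fun N : ℕ => ENNReal.ofReal (Real.exp (((fN N p.1 - fN N p.2) / r) ^ 2))) := by
        filter_upwards [Filter.eventually_ge_atTop (Nat.ceil (max |f p.1| |f p.2|))] with N hN
        have hNreal : max |f p.1| |f p.2| ≤ (N:ℝ) := by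
          calc max |f p.1| |f p.2| ≤ (Nat.ceil (max |f p.1| |f p.2|) : ℝ) := Nat.le_ceil _
            _ ≤ (N:ℝ) := by exact_mod_cast hN
        have hcl : ∀ x : M, |f x| ≤ (N:ℝ) → fN N x = f x := by
          intro x hx
          simp only [hfN]
          rw [abs_le] at hx
          rw [min_eq_right hx.2, max_eq_right hx.1]
        have h1 : fN N p.1 = f p.1 := hcl _ (le_trans (le_max_left _ _) hNreal)
        have h2 : fN N p.2 = f p.2 := hcl _ (le_trans (le_max_right _ _) hNreal)
        rw [h1, h2, hg]
      exact Filter.Tendsto.congr' hev tendsto_const_nhds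
    calc ∫⁻ p, ENNReal.ofReal (Real.exp ((g p / r) ^ 2)) ∂(μ.prod μ)
        = ∫⁻ p, Filter.liminf (fun N : ℕ =>
            ENNReal.ofReal (Real.exp (((fN N p.1 - fN N p.2) / r) ^ 2))) atTop ∂(μ.prod μ) := by
          exact lintegral_congr fun p => ((hptlim p).liminf_eq).symm
      _ ≤ Filter.liminf (fun N : ℕ => ∫⁻ p,
            ENNReal.ofReal (Real.exp (((fN N p.1 - fN N p.2) / r) ^ 2)) ∂(μ.prod μ)) atTop :=
          MeasureTheory.lintegral_liminf_le' hmeasN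
      _ ≤ Filter.liminf (fun _ : ℕ => (2 : ENNReal)) atTop :=
          Filter.liminf_le_liminf (Filter.Eventually.of_forall fun N => claim1 r hr N)
      _ = 2 := Filter.liminf_const _
  -- slice point x₀ and integrability of f and exponentials
  set r₁ : ℝ := Real.sqrt s + 1 with hr₁def
  have hr₁gt : Real.sqrt s < r₁ := by rw [hr₁def]; linarith
  have hr₁pos : 0 < r₁ := lt_of_le_of_lt (Real.sqrt_nonneg s) hr₁gt
  have hint1 := claim2 r₁ hr₁gt
  set E : M × M → ℝ := fun p => Real.exp ((g p / r₁) ^ 2) with hE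
  have hEm : AEMeasurable E (μ.prod μ) :=
    Real.measurable_exp.comp_aemeasurable ((hgm.div_const r₁).pow_const 2)
  have hEo : AEMeasurable (fun p : M × M => ENNReal.ofReal (E p)) (μ.prod μ) :=
    ENNReal.measurable_ofReal.comp_aemeasurable hEm
  have hElprod : ∫⁻ x, (∫⁻ y, ENNReal.ofReal (E (x, y)) ∂μ) ∂μ ≠ ⊤ := by
    rw [← MeasureTheory.lintegral_prod _ hEo]
    exact fun hcon => by rw [hcon] at hint1; exact (by norm_num : ¬ ((⊤:ENNReal) ≤ 2)) hint1
  have hinnerm : AEMeasurable (fun x => ∫⁻ y, ENNReal.ofReal (E (x, y)) ∂μ) μ := by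
    have hsl := MeasureTheory.Measure.ae_ae_of_ae_prod (μ := μ) (ν := μ) hEo.ae_eq_mk
    refine (Measurable.lintegral_prod_right' (ν := μ) (f := hEo.mk _)
      hEo.measurable_mk).aemeasurable.congr ?_
    filter_upwards [hsl] with x hx
    exact lintegral_congr_ae (Filter.EventuallyEq.symm hx)
  have hfin : ∀ᵐ x ∂μ, (∫⁻ y, ENNReal.ofReal (E (x, y)) ∂μ) < ⊤ :=
    MeasureTheory.ae_lt_top' hinnerm hElprod
  have hne : (ae μ).NeBot := MeasureTheory.ae_neBot.2 (IsProbabilityMeasure.ne_zero μ)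
  obtain ⟨x₀, hx₀fin⟩ := hfin.exists
  set φ : M → ℝ := fun y => Real.exp (((f x₀ - f y) / r₁) ^ 2) with hφ
  have hφm : AEMeasurable φ μ :=
    Real.measurable_exp.comp_aemeasurable
      (((aemeasurable_const.sub hfm).div_const r₁).pow_const 2)
  have hφInt : Integrable φ μ := by
    refine ⟨hφm.aestronglyMeasurable, ?_⟩
    rw [hasFiniteIntegral_iff_ofReal (Filter.Eventually.of_forall fun y => (Real.exp_pos _).le)]
    have hswap : (fun y => ENNReal.ofReal (φ y)) = fun y => ENNReal.ofReal (E (x₀, y)) := by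
      funext y; rfl
    rw [hswap]
    exact hx₀fin
  have hfInt : Integrable f μ := by
    refine Integrable.mono' ((hφInt.const_mul r₁).add (integrable_const |f x₀|))
      hfm.aestronglyMeasurable ?_
    filter_upwards with y
    have h1 : |f x₀ - f y| ≤ r₁ * φ y := aux_abs_le_mul_exp_sq hr₁pos (f x₀ - f y)
    have h2 : |f y| ≤ |f x₀| + |f x₀ - f y| := by
      have hh := abs_sub_abs_le_abs_sub (f y) (f x₀)
      have hh' : |f y - f x₀| = |f x₀ - f y| := abs_sub_comm _ _
      linarith
    calc ‖f y‖ = |f y| := rfl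
      _ ≤ |f x₀| + r₁ * φ y := by linarith
      _ = r₁ * φ y + |f x₀| := by ring
  have hexpInt : ∀ u : ℝ, Integrable (fun y => Real.exp (u * f y)) μ := by
    intro u
    set K : ℝ := |u| * |f x₀| + u ^ 2 * r₁ ^ 2 / 4 with hK
    refine Integrable.mono' (hφInt.const_mul (Real.exp K))
      (Real.measurable_exp.comp_aemeasurable (hfm.const_mul u)).aestronglyMeasurable ?_
    filter_upwards with y
    have h0 : u * f y ≤ |u| * |f y| := by
      calc u * f y ≤ |u * f y| := le_abs_self _
        _ = |u| * |f y| := abs_mul _ _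
    have h1 : |f y| ≤ |f x₀| + |f x₀ - f y| := by
      have hh := abs_sub_abs_le_abs_sub (f y) (f x₀)
      have hh' : |f y - f x₀| = |f x₀ - f y| := abs_sub_comm _ _
      linarith
    have h2 : |u| * |f x₀ - f y| ≤ u ^ 2 * r₁ ^ 2 / 4 + ((f x₀ - f y) / r₁) ^ 2 := by
      have hq := aux_mul_le_quarter hr₁pos |u| |f x₀ - f y|
      calc |u| * |f x₀ - f y| ≤ |u| ^ 2 * r₁ ^ 2 / 4 + |f x₀ - f y| ^ 2 / r₁ ^ 2 := hq
        _ = u ^ 2 * r₁ ^ 2 / 4 + ((f x₀ - f y) / r₁) ^ 2 := by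
            rw [sq_abs, sq_abs, div_pow]
    have h3 : u * f y ≤ K + ((f x₀ - f y) / r₁) ^ 2 := by
      have hmul : |u| * |f y| ≤ |u| * (|f x₀| + |f x₀ - f y|) :=
        mul_le_mul_of_nonneg_left h1 (abs_nonneg u)
      rw [hK]
      rw [mul_add] at hmul
      calc u * f y ≤ |u| * |f y| := h0
        _ ≤ |u| * |f x₀| + |u| * |f x₀ - f y| := hmul
        _ ≤ |u| * |f x₀| + (u ^ 2 * r₁ ^ 2 / 4 + ((f x₀ - f y) / r₁) ^ 2) := by linarith
        _ = _ := by ring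
    calc ‖Real.exp (u * f y)‖ = Real.exp (u * f y) := Real.norm_of_nonneg (Real.exp_pos _).le
      _ ≤ Real.exp (K + ((f x₀ - f y) / r₁) ^ 2) := Real.exp_le_exp.2 h3
      _ = Real.exp K * φ y := by rw [Real.exp_add]
  -- Jensen-type lower bound for ∫ exp(-t f)
  have hJ1 : 1 ≤ ∫ y, Real.exp (-t * f y) ∂μ := by
    have hintlin : Integrable (fun y => 1 + (-t) * f y) μ :=
      (integrable_const 1).add (hfInt.const_mul (-t))
    have hle : (fun y => 1 + (-t) * f y) ≤ fun y => Real.exp (-t * f y) := by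
      intro y
      have := Real.add_one_le_exp ((-t) * f y)
      calc 1 + (-t) * f y = (-t) * f y + 1 := by ring
        _ ≤ Real.exp ((-t) * f y) := this
        _ = Real.exp (-t * f y) := by rw [neg_mul]
    have hmono := integral_mono hintlin (hexpInt (-t)) hle
    have hval : ∫ y, (1 + (-t) * f y) ∂μ = 1 := by
      rw [integral_add (integrable_const 1) (hfInt.const_mul (-t)), integral_const,
        integral_const_mul, hf0]
      simp [measure_univ]
    linarith
  -- Claim 3 : mgf on the product
  have claim3 : ∀ r : ℝ, Real.sqrt s < r →
      ∫⁻ p, ENNReal.ofReal (Real.exp (t * g p)) ∂(μ.prod μ) ≤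
      ENNReal.ofReal (Real.exp (t ^ 2 * r ^ 2)) := by
    intro r hr
    have hrpos : 0 < r := lt_of_le_of_lt (Real.sqrt_nonneg s) hr
    have h2 := claim2 r hr
    have hmexp : AEMeasurable (fun p => ENNReal.ofReal (Real.exp ((g p / r) ^ 2))) (μ.prod μ) :=
      ENNReal.measurable_ofReal.comp_aemeasurable
        (Real.measurable_exp.comp_aemeasurable ((hgm.div_const r).pow_const 2))
    by_cases hcase : 2 ≤ t ^ 2 * r ^ 2
    · -- large t : AM-GM
      have hpt : ∀ p : M × M, Real.exp (t * g p) ≤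
          Real.exp (t ^ 2 * r ^ 2 / 4) * Real.exp ((g p / r) ^ 2) := by
        intro p
        rw [← Real.exp_add]
        apply Real.exp_le_exp.2
        have := aux_mul_le_quarter hrpos t (g p)
        calc t * g p ≤ t ^ 2 * r ^ 2 / 4 + (g p) ^ 2 / r ^ 2 := this
          _ = t ^ 2 * r ^ 2 / 4 + (g p / r) ^ 2 := by rw [div_pow]
      calc ∫⁻ p, ENNReal.ofReal (Real.exp (t * g p)) ∂(μ.prod μ)
          ≤ ∫⁻ p, ENNReal.ofReal (Real.exp (t ^ 2 * r ^ 2 / 4)) *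
            ENNReal.ofReal (Real.exp ((g p / r) ^ 2)) ∂(μ.prod μ) := by
            apply lintegral_mono
            intro p
            dsimp only
            rw [← ENNReal.ofReal_mul (Real.exp_pos _).le]
            exact ENNReal.ofReal_le_ofReal (hpt p)
        _ = ENNReal.ofReal (Real.exp (t ^ 2 * r ^ 2 / 4)) *
            ∫⁻ p, ENNReal.ofReal (Real.exp ((g p / r) ^ 2)) ∂(μ.prod μ) :=
            lintegral_const_mul'' _ hmexp
        _ ≤ ENNReal.ofReal (Real.exp (t ^ 2 * r ^ 2 / 4)) * 2 := mul_le_mul_right h2 _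
        _ ≤ ENNReal.ofReal (Real.exp (t ^ 2 * r ^ 2)) := by
            rw [show (2:ENNReal) = ENNReal.ofReal 2 by norm_num,
              ← ENNReal.ofReal_mul (Real.exp_pos _).le]
            apply ENNReal.ofReal_le_ofReal
            have h3 : (2:ℝ) ≤ Real.exp (3 * (t ^ 2 * r ^ 2) / 4) := by
              have := Real.add_one_le_exp (3 * (t ^ 2 * r ^ 2) / 4)
              nlinarith
            calc Real.exp (t ^ 2 * r ^ 2 / 4) * 2 ≤
                Real.exp (t ^ 2 * r ^ 2 / 4) * Real.exp (3 * (t ^ 2 * r ^ 2) / 4) := by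
                  exact mul_le_mul_of_nonneg_left h3 (Real.exp_pos _).le
              _ = Real.exp (t ^ 2 * r ^ 2) := by rw [← Real.exp_add]; ring_nf
    · -- small t : symmetrization
      push_neg at hcase
      set θ : ℝ := t ^ 2 * r ^ 2 / 2 with hθdef
      have hθ0 : 0 ≤ θ := by rw [hθdef]; positivity
      have hθ1 : θ ≤ 1 := by rw [hθdef]; linarith
      have h2θ : (0:ℝ) ≤ 2 * θ := by linarith
      have h2θ' : (0:ℝ) ≤ 2 * (1 - θ) := by linarith
      have hFm : AEMeasurable (fun p => ENNReal.ofReal (Real.exp (t * g p))) (μ.prod μ) :=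
        ENNReal.measurable_ofReal.comp_aemeasurable
          (Real.measurable_exp.comp_aemeasurable (hgm.const_mul t))
      have hFm' : AEMeasurable (fun p => ENNReal.ofReal (Real.exp (-t * g p))) (μ.prod μ) :=
        ENNReal.measurable_ofReal.comp_aemeasurable
          (Real.measurable_exp.comp_aemeasurable (hgm.const_mul (-t)))
      have hswap : ∫⁻ p, ENNReal.ofReal (Real.exp (t * g p)) ∂(μ.prod μ) =
          ∫⁻ p, ENNReal.ofReal (Real.exp (-t * g p)) ∂(μ.prod μ) := by
        have hmp : Measure.map Prod.swap (μ.prod μ) = μ.prod μ :=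
          MeasureTheory.Measure.prod_swap
        calc ∫⁻ p, ENNReal.ofReal (Real.exp (t * g p)) ∂(μ.prod μ)
            = ∫⁻ p, ENNReal.ofReal (Real.exp (t * g p))
              ∂(Measure.map Prod.swap (μ.prod μ)) := by rw [hmp]
          _ = ∫⁻ p : M × M, ENNReal.ofReal (Real.exp (t * g (Prod.swap p))) ∂(μ.prod μ) := by
              apply MeasureTheory.lintegral_map'
              · rw [hmp]; exact hFm
              · exact measurable_swap.aemeasurable
          _ = ∫⁻ p, ENNReal.ofReal (Real.exp (-t * g p)) ∂(μ.prod μ) := by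
              apply lintegral_congr
              intro p
              congr 1
              rw [hg]
              simp only [Prod.fst_swap, Prod.snd_swap]
              ring_nf
      have hpt : ∀ p : M × M, Real.exp (t * g p) + Real.exp (-t * g p) ≤
          2 * θ * Real.exp ((g p / r) ^ 2) + 2 * (1 - θ) := by
        intro p
        have h1 : Real.exp (t * g p) + Real.exp (-(t * g p)) ≤
            2 * Real.exp ((t * g p) ^ 2 / 2) := aux_exp_add_exp_neg_le _
        have h2 : (t * g p) ^ 2 / 2 = θ * (g p / r) ^ 2 := by
          rw [hθdef]; field_simp
        have h3 : Real.exp (θ * (g p / r) ^ 2) = (Real.exp ((g p / r) ^ 2)) ^ θ := by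
          rw [mul_comm, Real.exp_mul]
        have h4 : (Real.exp ((g p / r) ^ 2)) ^ θ ≤ θ * Real.exp ((g p / r) ^ 2) + (1 - θ) := by
          have hh := Real.geom_mean_le_arith_mean2_weighted hθ0 (by linarith : (0:ℝ) ≤ 1 - θ)
            (Real.exp_pos ((g p / r) ^ 2)).le (zero_le_one) (by ring)
          simpa using hh
        have h5 : Real.exp (-t * g p) = Real.exp (-(t * g p)) := by rw [neg_mul]
        rw [h5]
        calc Real.exp (t * g p) + Real.exp (-(t * g p)) ≤
            2 * Real.exp ((t * g p) ^ 2 / 2) := h1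
          _ = 2 * (Real.exp ((g p / r) ^ 2)) ^ θ := by rw [h2, h3]
          _ ≤ 2 * (θ * Real.exp ((g p / r) ^ 2) + (1 - θ)) := by linarith
          _ = 2 * θ * Real.exp ((g p / r) ^ 2) + 2 * (1 - θ) := by ring
      have hsum : (∫⁻ p, ENNReal.ofReal (Real.exp (t * g p)) ∂(μ.prod μ)) +
          (∫⁻ p, ENNReal.ofReal (Real.exp (-t * g p)) ∂(μ.prod μ)) ≤
          ENNReal.ofReal (2 * θ) * 2 + ENNReal.ofReal (2 * (1 - θ)) := by
        calc (∫⁻ p, ENNReal.ofReal (Real.exp (t * g p)) ∂(μ.prod μ)) +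
            (∫⁻ p, ENNReal.ofReal (Real.exp (-t * g p)) ∂(μ.prod μ))
            = ∫⁻ p, (ENNReal.ofReal (Real.exp (t * g p)) +
              ENNReal.ofReal (Real.exp (-t * g p))) ∂(μ.prod μ) :=
              (lintegral_add_left' hFm _).symm
          _ ≤ ∫⁻ p, (ENNReal.ofReal (2 * θ) * ENNReal.ofReal (Real.exp ((g p / r) ^ 2)) +
              ENNReal.ofReal (2 * (1 - θ))) ∂(μ.prod μ) := by
              apply lintegral_mono
              intro p
              dsimp only
              rw [← ENNReal.ofReal_add (Real.exp_pos _).le (Real.exp_pos _).le,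
                ← ENNReal.ofReal_mul h2θ,
                ← ENNReal.ofReal_add (mul_nonneg h2θ (Real.exp_pos _).le) h2θ']
              exact ENNReal.ofReal_le_ofReal (hpt p)
          _ = ENNReal.ofReal (2 * θ) *
              (∫⁻ p, ENNReal.ofReal (Real.exp ((g p / r) ^ 2)) ∂(μ.prod μ)) +
              ENNReal.ofReal (2 * (1 - θ)) := by
              rw [lintegral_add_left' ((AEMeasurable.const_mul hmexp _ : AEMeasurable _ _)) _,
                lintegral_const_mul'' _ hmexp, lintegral_const, measure_univ, mul_one]
          _ ≤ ENNReal.ofReal (2 * θ) * 2 + ENNReal.ofReal (2 * (1 - θ)) :=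
              add_le_add (mul_le_mul_right h2 _) le_rfl
      rw [← hswap] at hsum
      have hsum2 : 2 * (∫⁻ p, ENNReal.ofReal (Real.exp (t * g p)) ∂(μ.prod μ)) ≤
          2 * ENNReal.ofReal (1 + θ) := by
        rw [two_mul]
        calc _ ≤ ENNReal.ofReal (2 * θ) * 2 + ENNReal.ofReal (2 * (1 - θ)) := hsum
          _ = ENNReal.ofReal (4 * θ) + ENNReal.ofReal (2 * (1 - θ)) := by
              rw [show (2:ENNReal) = ENNReal.ofReal 2 by norm_num,
                ← ENNReal.ofReal_mul h2θ]
              congr 1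
              ring
          _ = ENNReal.ofReal (4 * θ + 2 * (1 - θ)) := by
              rw [← ENNReal.ofReal_add (by linarith) h2θ']
          _ = 2 * ENNReal.ofReal (1 + θ) := by
              rw [show (2:ENNReal) = ENNReal.ofReal 2 by norm_num,
                ← ENNReal.ofReal_mul (by norm_num)]
              congr 1
              ring
      have hdiv := (ENNReal.mul_le_mul_iff_right (by norm_num : (2:ENNReal) ≠ 0)
        (by norm_num : (2:ENNReal) ≠ ⊤)).1 hsum2
      calc ∫⁻ p, ENNReal.ofReal (Real.exp (t * g p)) ∂(μ.prod μ) ≤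
          ENNReal.ofReal (1 + θ) := hdiv
        _ ≤ ENNReal.ofReal (Real.exp (t ^ 2 * r ^ 2)) := by
            apply ENNReal.ofReal_le_ofReal
            have ha := Real.add_one_le_exp θ
            have hb : Real.exp θ ≤ Real.exp (t ^ 2 * r ^ 2) := by
              apply Real.exp_le_exp.2
              rw [hθdef]
              nlinarith [sq_nonneg t, sq_nonneg r]
            linarith
  -- assemble
  have hA0 : 0 ≤ ∫ x, Real.exp (t * f x) ∂μ := integral_nonneg fun x => (Real.exp_pos _).le
  have hfunprod : (fun p : M × M => Real.exp (t * f p.1) * Real.exp (-t * f p.2)) =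
      fun p => Real.exp (t * g p) := by
    funext p
    rw [← Real.exp_add, hg]
    congr 1
    ring
  have hintprod : Integrable (fun p : M × M => Real.exp (t * g p)) (μ.prod μ) := by
    rw [← hfunprod]
    exact (hexpInt t).mul_prod (hexpInt (-t))
  have hprod : (∫ x, Real.exp (t * f x) ∂μ) * (∫ y, Real.exp (-t * f y) ∂μ) =
      ∫ p, Real.exp (t * g p) ∂(μ.prod μ) := by
    rw [← MeasureTheory.integral_prod_mul (fun x => Real.exp (t * f x))
      (fun y => Real.exp (-t * f y))]
    rw [← hfunprod]
  have hmain : ∀ r : ℝ, Real.sqrt s < r →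
      ∫ x, Real.exp (t * f x) ∂μ ≤ Real.exp (t ^ 2 * r ^ 2) := by
    intro r hr
    have hJle : (∫ p, Real.exp (t * g p) ∂(μ.prod μ)) ≤ Real.exp (t ^ 2 * r ^ 2) := by
      have hcl := claim3 r hr
      rw [← ofReal_integral_eq_lintegral_ofReal hintprod
        (Filter.Eventually.of_forall fun p => (Real.exp_pos _).le)] at hcl
      exact (ENNReal.ofReal_le_ofReal_iff (Real.exp_pos _).le).1 hcl
    calc ∫ x, Real.exp (t * f x) ∂μ = (∫ x, Real.exp (t * f x) ∂μ) * 1 := (mul_one _).symm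
      _ ≤ (∫ x, Real.exp (t * f x) ∂μ) * ∫ y, Real.exp (-t * f y) ∂μ :=
          mul_le_mul_of_nonneg_left hJ1 hA0
      _ = ∫ p, Real.exp (t * g p) ∂(μ.prod μ) := hprod
      _ ≤ Real.exp (t ^ 2 * r ^ 2) := hJle
  have hseq : ∀ n : ℕ, ∫ x, Real.exp (t * f x) ∂μ ≤ Real.exp (t ^ 2 * (s + 1 / ((n:ℝ) + 1))) := by
    intro n
    have hpos : (0:ℝ) < 1 / ((n:ℝ) + 1) := by positivity
    have hlt : Real.sqrt s < Real.sqrt (s + 1 / ((n:ℝ) + 1)) :=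
      Real.sqrt_lt_sqrt hs0 (by linarith)
    have hh := hmain _ hlt
    rwa [Real.sq_sqrt (by linarith)] at hh
  have htend : Filter.Tendsto (fun n : ℕ => Real.exp (t ^ 2 * (s + 1 / ((n:ℝ) + 1))))
      atTop (nhds (Real.exp (t ^ 2 * s))) := by
    have h1 : Filter.Tendsto (fun n : ℕ => s + 1 / ((n:ℝ) + 1)) atTop (nhds (s + 0)) :=
      tendsto_const_nhds.add tendsto_one_div_add_atTop_nhds_zero_nat
    rw [add_zero] at h1
    have h2 : Filter.Tendsto (fun n : ℕ => t ^ 2 * (s + 1 / ((n:ℝ) + 1))) atTop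
        (nhds (t ^ 2 * s)) := h1.const_mul _
    exact (Real.continuous_exp.tendsto _).comp h2
  have hfin2 : ∫ x, Real.exp (t * f x) ∂μ ≤ Real.exp (t ^ 2 * s) := ge_of_tendsto' htend hseq
  calc ∫ x, Real.exp (t * f x) ∂μ ≤ Real.exp (t ^ 2 * s) := hfin2
    _ ≤ Real.exp (4 * s * t ^ 2 / 2) := by
        apply Real.exp_le_exp.2
        nlinarith [sq_nonneg t, hs0]

end AuxLemmas

/-- **Lemma 3.2.** For a metric probability space `(M,d,μ)`,
`(1/(4√6))·sup_f ‖f(x)−f(y)‖²_{ψ₂(μ⊗μ)} ≤ σ²(μ) ≤ 4·sup_f ‖f(x)−f(y)‖²_{ψ₂(μ⊗μ)}`,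
the suprema running over all `f : M → ℝ` with `‖f‖_Lip ≤ 1`. -/
theorem subgaussian_const_vs_symmetrized_psi2 {M : Type*} [MetricSpace M]
    [MeasurableSpace M] (μ : Measure M) [IsProbabilityMeasure μ] :
    (1 / (4 * Real.sqrt 6)) *
        sSup {v : ℝ | ∃ f : M → ℝ, LipschitzWith 1 f ∧
          v = psiNorm (μ.prod μ) 2 (fun p : M × M => f p.1 - f p.2) ^ 2} ≤
        subgaussianConst μ ∧
      subgaussianConst μ ≤
        4 * sSup {v : ℝ | ∃ f : M → ℝ, LipschitzWith 1 f ∧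
          v = psiNorm (μ.prod μ) 2 (fun p : M × M => f p.1 - f p.2) ^ 2} := by
  classical
  set Sv : Set ℝ := {v : ℝ | ∃ f : M → ℝ, LipschitzWith 1 f ∧
      v = psiNorm (μ.prod μ) 2 (fun p : M × M => f p.1 - f p.2) ^ 2} with hSv
  set T : Set ℝ := {σ2 : ℝ | IsSubgaussianBound μ σ2} with hT
  have hsubeq : subgaussianConst μ = sInf T := rfl
  have hTbdd : BddBelow T := ⟨0, fun x hx => hx.1⟩
  have hL : ∀ v ∈ Sv, ∀ σ2 ∈ T, v ≤ 16 / 3 * σ2 := by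
    rintro v ⟨f, hf, rfl⟩ σ2 hσ2
    exact aux_lemmaL μ hf hσ2
  have h0mem : (0:ℝ) ∈ Sv := by
    refine ⟨fun _ => 0, (LipschitzWith.const 0).weaken zero_le_one, ?_⟩
    rw [aux_psiNorm_zero_sq (μ.prod μ)]
    norm_num
  have hsqrt6 : (4:ℝ)/3 ≤ Real.sqrt 6 :=
    (Real.le_sqrt (by norm_num) (by norm_num)).2 (by norm_num)
  have h6pos : (0:ℝ) < 4 * Real.sqrt 6 := by
    have := Real.sqrt_nonneg 6; linarith
  by_cases hBdd : BddAbove Sv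
  · have hU := aux_lemmaU μ hBdd
    have hUmem : 4 * sSup Sv ∈ T := hU
    have hTne : T.Nonempty := ⟨_, hUmem⟩
    constructor
    · rw [hsubeq]
      apply le_csInf hTne
      intro σ2 hσ2
      have hσ0 : 0 ≤ σ2 := hσ2.1
      have hsup : sSup Sv ≤ 16 / 3 * σ2 := csSup_le ⟨0, h0mem⟩ fun v hv => hL v hv σ2 hσ2
      rw [div_mul_eq_mul_div, one_mul, div_le_iff₀ h6pos]
      nlinarith
    · rw [hsubeq]
      exact csInf_le hTbdd hUmem
  · have hsup0 : sSup Sv = 0 := Real.sSup_of_not_bddAbove hBdd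
    have hTempty : T = ∅ := by
      rw [Set.eq_empty_iff_forall_notMem]
      intro σ2 hσ2
      exact hBdd ⟨16 / 3 * σ2, fun v hv => hL v hv σ2 hσ2⟩
    rw [hsubeq, hsup0, hTempty, Real.sInf_empty]
    norm_num
end

section
/- Let M = {0,1}ⁿ be the discrete hypercube equipped with the Hamming distance dₙ(x,y) = #{i : xᵢ ≠ yᵢ} and the uniform probability measure μ. Then there is a universal constant c (independent of n and A) such that for any non-empty set A ⊂ {0,1}ⁿ, the subgaussian constant of the normalized restricted (uniform-on-A) measure μ_A satisfies σ²(μ_A) ≤ c·n·log(e/μ(A)). -/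
open MeasureTheory Real Filter

/-- Every subset of the (finite, discrete) Hamming cube is measurable. -/
instance {ι : Type*} {β : ι → Type*} : MeasurableSpace (Hamming β) := ⊤

/-- The uniform probability measure on the discrete hypercube `{0,1}ⁿ`
(realized as `Hamming (fun _ : Fin n => Bool)`, carrying the Hamming distance). -/
noncomputable def uniformCube (n : ℕ) : Measure (Hamming fun _ : Fin n => Bool) :=
  ((Fintype.card (Hamming fun _ : Fin n => Bool) : ENNReal))⁻¹ • Measure.count

set_option maxHeartbeats 1000000

namespace Cor54

open Finset
open scoped ENNReal


lemma pow_div_factorial_le_exp {x : ℝ} (hx : 0 ≤ x) (m : ℕ) :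
    x ^ m / (Nat.factorial m : ℝ) ≤ Real.exp x := by
  have h1 : x ^ m / (Nat.factorial m : ℝ)
      ≤ ∑ i ∈ Finset.range (m + 1), x ^ i / (Nat.factorial i : ℝ) :=
    Finset.single_le_sum (f := fun i => x ^ i / (Nat.factorial i : ℝ)) (fun i _ => by positivity)
      (Finset.self_mem_range_succ m)
  exact h1.trans (Real.sum_le_exp_of_nonneg hx _)

lemma two_point {a b : ℝ} (hab : |a - b| ≤ 1) (s : ℝ) :
    Real.exp (s * a) + Real.exp (s * b) ≤
      2 * Real.exp (s * ((a + b) / 2)) * Real.exp (s ^ 2 / 8) := by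
  have e1 : s * a = s * ((a + b) / 2) + s * ((a - b) / 2) := by ring
  have e2 : s * b = s * ((a + b) / 2) + -(s * ((a - b) / 2)) := by ring
  have h2 : Real.cosh (s * ((a - b) / 2)) ≤ Real.exp (s ^ 2 / 8) := by
    refine (Real.cosh_le_exp_half_sq _).trans (Real.exp_le_exp.2 ?_)
    have hab2 : (a - b) ^ 2 ≤ 1 := by
      nlinarith [sq_abs (a - b), abs_nonneg (a - b)]
    nlinarith [sq_nonneg s]
  rw [Real.cosh_eq] at h2
  rw [e1, e2, Real.exp_add, Real.exp_add]
  nlinarith [Real.exp_pos (s * ((a + b) / 2))]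

lemma hammingDist_cons {n : ℕ} (b b' : Bool) (x y : Fin n → Bool) :
    hammingDist (Fin.cons b x : Fin (n+1) → Bool) (Fin.cons b' y)
      = (if b = b' then 0 else 1) + hammingDist x y := by
  classical
  simp only [hammingDist, Finset.card_filter]
  rw [Fin.sum_univ_succ]
  simp only [Fin.cons_zero, Fin.cons_succ]
  by_cases h : b = b' <;> simp [h]

lemma mcdiarmid : ∀ (n : ℕ) (F : (Fin n → Bool) → ℝ),
    (∀ x y, |F x - F y| ≤ (hammingDist x y : ℝ)) → (∑ x, F x = 0) → ∀ s : ℝ,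
    ∑ x, Real.exp (s * F x) ≤ 2 ^ n * Real.exp (s ^ 2 * n / 8) := by
  intro n
  induction n with
  | zero =>
    intro F hF h0 s
    have hFx : ∀ x : Fin 0 → Bool, F x = 0 := by
      intro x
      have hx : ∑ y : Fin 0 → Bool, F y = F x := by
        rw [Fintype.sum_unique F]
        exact congrArg F (Subsingleton.elim _ _)
      rw [← hx, h0]
    calc ∑ x : Fin 0 → Bool, Real.exp (s * F x)
        = ∑ _x : Fin 0 → Bool, (1:ℝ) := by
          refine Finset.sum_congr rfl fun x _ => ?_
          rw [hFx x]
          simp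
      _ ≤ 2 ^ 0 * Real.exp (s ^ 2 * (0:ℕ) / 8) := by
          simp [Fintype.card_fun]
  | succ n ih =>
    intro F hF h0 s
    have key : ∀ (φ : (Fin (n+1) → Bool) → ℝ),
        ∑ z, φ z = ∑ x : Fin n → Bool, (φ (Fin.cons false x) + φ (Fin.cons true x)) := by
      intro φ
      rw [← (Fin.consEquiv (fun _ : Fin (n+1) => Bool)).sum_comp φ, Fintype.sum_prod_type,
        Fintype.sum_bool]
      rw [Finset.sum_add_distrib]
      exact add_comm _ _
    set G : (Fin n → Bool) → ℝ := fun x => (F (Fin.cons false x) + F (Fin.cons true x)) / 2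
      with hGdef
    have hGlip : ∀ x y, |G x - G y| ≤ (hammingDist x y : ℝ) := by
      intro x y
      have h1 := hF (Fin.cons false x) (Fin.cons false y)
      have h2 := hF (Fin.cons true x) (Fin.cons true y)
      rw [hammingDist_cons] at h1 h2
      simp only [if_pos rfl] at h1 h2
      push_cast at h1 h2
      have e : G x - G y = ((F (Fin.cons false x) - F (Fin.cons false y))
          + (F (Fin.cons true x) - F (Fin.cons true y))) / 2 := by
        rw [hGdef]; ring
      rw [e]
      calc |((F (Fin.cons false x) - F (Fin.cons false y))
          + (F (Fin.cons true x) - F (Fin.cons true y))) / 2|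
          ≤ (|F (Fin.cons false x) - F (Fin.cons false y)|
            + |F (Fin.cons true x) - F (Fin.cons true y)|) / 2 := by
            rw [abs_div, abs_two]
            gcongr
            exact abs_add_le _ _
        _ ≤ (hammingDist x y : ℝ) := by
            rw [zero_add] at h1 h2
            linarith
    have hG0 : ∑ x, G x = 0 := by
      have hk := key F
      rw [h0] at hk
      have : ∑ x, G x = (∑ x : Fin n → Bool,
          (F (Fin.cons false x) + F (Fin.cons true x))) / 2 := by
        rw [hGdef, Finset.sum_div]
      rw [this, ← hk]
      norm_num
    calc ∑ z, Real.exp (s * F z)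
        = ∑ x : Fin n → Bool,
            (Real.exp (s * F (Fin.cons false x)) + Real.exp (s * F (Fin.cons true x))) :=
          key _
      _ ≤ ∑ x : Fin n → Bool, 2 * Real.exp (s * G x) * Real.exp (s ^ 2 / 8) := by
          apply Finset.sum_le_sum
          intro x _
          have hd : |F (Fin.cons false x) - F (Fin.cons true x)| ≤ 1 := by
            have h3 := hF (Fin.cons false x) (Fin.cons true x)
            rw [hammingDist_cons] at h3
            simpa using h3
          exact two_point hd s
      _ = 2 * Real.exp (s ^ 2 / 8) * ∑ x, Real.exp (s * G x) := by
          rw [Finset.mul_sum]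
          apply Finset.sum_congr rfl
          intro x _
          ring
      _ ≤ 2 * Real.exp (s ^ 2 / 8) * (2 ^ n * Real.exp (s ^ 2 * n / 8)) := by
          have hpos : (0:ℝ) ≤ 2 * Real.exp (s ^ 2 / 8) := by positivity
          exact mul_le_mul_of_nonneg_left (ih G hGlip hG0 s) hpos
      _ = 2 ^ (n+1) * Real.exp (s ^ 2 * (n+1 : ℕ) / 8) := by
          rw [show ((n+1 : ℕ) : ℝ) = (n : ℝ) + 1 by push_cast; ring]
          rw [show (2:ℝ) * Real.exp (s ^ 2 / 8) * (2 ^ n * Real.exp (s ^ 2 * n / 8))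
              = 2 * 2 ^ n * (Real.exp (s ^ 2 / 8) * Real.exp (s ^ 2 * (n:ℝ) / 8)) from by ring,
            ← Real.exp_add, show (2:ℝ) ^ (n+1) = 2 * 2 ^ n from by ring]
          congr 1
          ring
lemma factorial_bound : ∀ k : ℕ, Nat.factorial (2 * k) ≤ 4 ^ k * Nat.factorial k * k ^ k := by
  intro k
  induction k with
  | zero => simp
  | succ k ih =>
    have e1 : Nat.factorial (2 * (k+1)) = (2*k+2) * ((2*k+1) * Nat.factorial (2*k)) := by
      rw [show 2 * (k+1) = (2*k+1)+1 from by ring, Nat.factorial_succ,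
        show 2*k+1 = (2*k)+1 from rfl, Nat.factorial_succ]
    calc Nat.factorial (2*(k+1)) = (2*k+2) * ((2*k+1) * Nat.factorial (2*k)) := e1
      _ ≤ (2*k+2) * ((2*k+1) * (4 ^ k * Nat.factorial k * k ^ k)) :=
          Nat.mul_le_mul_left _ (Nat.mul_le_mul_left _ ih)
      _ ≤ (2*k+2) * ((2*k+2) * (4 ^ k * Nat.factorial k * (k+1) ^ k)) := by
          apply Nat.mul_le_mul_left
          exact Nat.mul_le_mul (Nat.le_succ _)
            (Nat.mul_le_mul_left _ (Nat.pow_le_pow_left (Nat.le_succ k) k))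
      _ = 4 ^ (k+1) * Nat.factorial (k+1) * (k+1) ^ (k+1) := by
          rw [Nat.factorial_succ]
          ring
lemma moment_bound {n : ℕ} (hn : 1 ≤ n) (F : (Fin n → Bool) → ℝ)
    (hF : ∀ x y, |F x - F y| ≤ (hammingDist x y : ℝ)) (h0 : ∑ x, F x = 0)
    {k : ℕ} (hk : 1 ≤ k) :
    ∑ x, (F x) ^ (2*k) ≤
      2 ^ n * 2 * (Nat.factorial (2*k) : ℝ) * ((n:ℝ)/(8*k)) ^ k * Real.exp 1 ^ k := by
  have hn0 : (0:ℝ) < n := by exact_mod_cast hn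
  have hk0 : (0:ℝ) < k := by exact_mod_cast hk
  set s : ℝ := Real.sqrt (8*k/n) with hs
  have hs0 : 0 < s := Real.sqrt_pos.2 (by positivity)
  have hs2 : s ^ 2 = 8*k/n := Real.sq_sqrt (by positivity)
  have hpt : ∀ x, s ^ (2*k) * (F x) ^ (2*k) ≤
      (Nat.factorial (2*k) : ℝ) * (Real.exp (s * F x) + Real.exp (-s * F x)) := by
    intro x
    have h1 : |s * F x| ^ (2*k) / (Nat.factorial (2*k) : ℝ) ≤ Real.exp |s * F x| :=
      pow_div_factorial_le_exp (abs_nonneg _) _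
    have h2 : Real.exp |s * F x| ≤ Real.exp (s * F x) + Real.exp (-s * F x) := by
      rcases abs_cases (s * F x) with ⟨h, _⟩ | ⟨h, _⟩ <;> rw [h] <;>
        [nlinarith [Real.exp_pos (-s * F x)]; nlinarith [Real.exp_pos (s * F x),
          Real.exp_le_exp.2 (le_of_eq (neg_mul s (F x)).symm)]]
    have h3 : |s * F x| ^ (2*k) = s ^ (2*k) * (F x) ^ (2*k) := by
      rw [abs_mul, mul_pow, abs_of_pos hs0, Even.pow_abs (even_two_mul k)]
    have hfac : (0:ℝ) < (Nat.factorial (2*k) : ℝ) := by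
      exact_mod_cast Nat.factorial_pos (2*k)
    rw [h3] at h1
    calc s ^ (2*k) * (F x) ^ (2*k)
        ≤ (Nat.factorial (2*k) : ℝ) * Real.exp |s * F x| := by
          rw [div_le_iff₀ hfac] at h1
          linarith [h1]
      _ ≤ _ := by
          exact mul_le_mul_of_nonneg_left h2 (le_of_lt hfac)
  have sum1 : ∑ x, (Real.exp (s * F x) + Real.exp (-s * F x))
      ≤ 2 ^ n * (2 * Real.exp (s ^ 2 * n / 8)) := by
    rw [Finset.sum_add_distrib]
    have hA := mcdiarmid n F hF h0 s
    have hB := mcdiarmid n F hF h0 (-s)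
    have hBB : ∑ x, Real.exp (-s * F x) ≤ 2 ^ n * Real.exp (s ^ 2 * n / 8) := by
      have : (-s) ^ 2 = s ^ 2 := by ring
      rw [← this]
      exact hB
    linarith
  have hkey : s ^ (2*k) * ∑ x, (F x) ^ (2*k)
      ≤ (Nat.factorial (2*k) : ℝ) * (2 ^ n * (2 * Real.exp (s ^ 2 * n / 8))) := by
    rw [Finset.mul_sum]
    calc ∑ x, s ^ (2*k) * (F x) ^ (2*k)
        ≤ ∑ x, (Nat.factorial (2*k) : ℝ) * (Real.exp (s * F x) + Real.exp (-s * F x)) :=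
          Finset.sum_le_sum fun x _ => hpt x
      _ = (Nat.factorial (2*k) : ℝ) * ∑ x, (Real.exp (s * F x) + Real.exp (-s * F x)) :=
          (Finset.mul_sum _ _ _).symm
      _ ≤ _ := by
          have hfac : (0:ℝ) ≤ (Nat.factorial (2*k) : ℝ) := by positivity
          exact mul_le_mul_of_nonneg_left sum1 hfac
  have hs2n : s ^ 2 * n / 8 = k := by
    rw [hs2]
    field_simp
  have hexp1 : Real.exp (s ^ 2 * n / 8) = Real.exp 1 ^ k := by
    rw [hs2n, ← Real.exp_nat_mul, mul_one]
  have hspow : s ^ (2*k) = ((8*k:ℝ)/n) ^ k := by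
    rw [pow_mul, hs2]
  have hsp0 : (0:ℝ) < ((8*k:ℝ)/n) ^ k := by positivity
  rw [hexp1] at hkey
  rw [hspow] at hkey
  calc ∑ x, (F x) ^ (2*k)
      = (((8*k:ℝ)/n) ^ k * ∑ x, (F x) ^ (2*k)) / ((8*k:ℝ)/n) ^ k := by
        field_simp
    _ ≤ ((Nat.factorial (2*k) : ℝ) * (2 ^ n * (2 * Real.exp 1 ^ k))) / ((8*k:ℝ)/n) ^ k := by
        gcongr
    _ = 2 ^ n * 2 * (Nat.factorial (2*k) : ℝ) * ((n:ℝ)/(8*k)) ^ k * Real.exp 1 ^ k := by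
        rw [show ((n:ℝ)/(8*k)) ^ k = (((8*k:ℝ)/n) ^ k)⁻¹ from by
          rw [← inv_pow, inv_div]]
        field_simp
lemma exp_sq_bound {n : ℕ} (hn : 1 ≤ n) (F : (Fin n → Bool) → ℝ)
    (hF : ∀ x y, |F x - F y| ≤ (hammingDist x y : ℝ)) (h0 : ∑ x, F x = 0)
    {β : ℝ} (hβ0 : 0 ≤ β) (hβ : β * n * Real.exp 1 ≤ 1/2) :
    ∑ x, Real.exp (β * (F x) ^ 2) ≤ 2 ^ n * 4 := by
  have hn0 : (0:ℝ) < n := by exact_mod_cast hn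
  have hexp : ∀ y : ℝ, Real.exp y = ∑' k : ℕ, y ^ k / (Nat.factorial k : ℝ) := fun y => by
    rw [Real.exp_eq_exp_ℝ]
    exact congrFun NormedSpace.exp_eq_tsum_div y
  have hsummand : ∀ x : Fin n → Bool,
      Summable (fun k : ℕ => (β * (F x) ^ 2) ^ k / (Nat.factorial k : ℝ)) := fun x =>
    Real.summable_pow_div_factorial _
  have hswap : ∑ x, Real.exp (β * (F x) ^ 2)
      = ∑' k : ℕ, ∑ x, (β * (F x) ^ 2) ^ k / (Nat.factorial k : ℝ) := by
    have := Summable.tsum_finsetSum (f := fun (x : Fin n → Bool) (k : ℕ) =>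
      (β * (F x) ^ 2) ^ k / (Nat.factorial k : ℝ)) (s := Finset.univ)
      (fun x _ => hsummand x)
    rw [this]
    exact Finset.sum_congr rfl fun x _ => hexp _
  have hcard : (Fintype.card (Fin n → Bool) : ℝ) = 2 ^ n := by
    simp [Fintype.card_fun]
  have hterm : ∀ k : ℕ, ∑ x, (β * (F x) ^ 2) ^ k / (Nat.factorial k : ℝ)
      ≤ (2 ^ n * 2 : ℝ) * (1/2) ^ k := by
    intro k
    rcases Nat.eq_zero_or_pos k with hk | hk
    · subst hk
      simp only [pow_zero, Nat.factorial_zero, Nat.cast_one, div_one]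
      rw [Finset.sum_const, Finset.card_univ, nsmul_eq_mul, mul_one, hcard]
      nlinarith [pow_pos (show (0:ℝ) < 2 from by norm_num) n]
    · have hk0 : (0:ℝ) < k := by exact_mod_cast hk
      have hmom := moment_bound hn F hF h0 hk
      have hfac : (0:ℝ) < (Nat.factorial k : ℝ) := by exact_mod_cast Nat.factorial_pos k
      have step1 : ∀ x : Fin n → Bool, (β * (F x) ^ 2) ^ k / (Nat.factorial k : ℝ)
          = (β ^ k / (Nat.factorial k : ℝ)) * (F x) ^ (2*k) := by
        intro x
        rw [mul_pow, pow_mul]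
        ring
      calc ∑ x, (β * (F x) ^ 2) ^ k / (Nat.factorial k : ℝ)
          = (β ^ k / (Nat.factorial k : ℝ)) * ∑ x, (F x) ^ (2*k) := by
            rw [Finset.mul_sum]
            exact Finset.sum_congr rfl fun x _ => step1 x
        _ ≤ (β ^ k / (Nat.factorial k : ℝ)) *
              (2 ^ n * 2 * (Nat.factorial (2*k) : ℝ) * ((n:ℝ)/(8*k)) ^ k * Real.exp 1 ^ k) := by
            apply mul_le_mul_of_nonneg_left hmom (by positivity)
        _ ≤ (β ^ k / (Nat.factorial k : ℝ)) *
              (2 ^ n * 2 * ((4:ℝ) ^ k * (Nat.factorial k : ℝ) * (k:ℝ) ^ k)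
                * ((n:ℝ)/(8*k)) ^ k * Real.exp 1 ^ k) := by
            have hfb : ((Nat.factorial (2*k) : ℕ) : ℝ)
                ≤ ((4 ^ k * Nat.factorial k * k ^ k : ℕ) : ℝ) := by
              exact_mod_cast factorial_bound k
            push_cast at hfb
            gcongr
        _ = 2 ^ n * 2 * (β * (4:ℝ) * k * ((n:ℝ)/(8*k)) * Real.exp 1) ^ k := by
            rw [show (β * (4:ℝ) * k * ((n:ℝ)/(8*k)) * Real.exp 1) ^ k
                = β ^ k * (4:ℝ) ^ k * (k:ℝ) ^ k * ((n:ℝ)/(8*k)) ^ k * Real.exp 1 ^ k from by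
              rw [mul_pow, mul_pow, mul_pow, mul_pow]]
            field_simp
        _ ≤ (2 ^ n * 2 : ℝ) * (1/2) ^ k := by
            have hid : β * (4:ℝ) * k * ((n:ℝ)/(8*k)) * Real.exp 1 = β * n * Real.exp 1 / 2 := by
              field_simp
              ring
            rw [hid]
            have h14 : β * n * Real.exp 1 / 2 ≤ 1/2 := by
              nlinarith [Real.exp_pos 1]
            have h0' : 0 ≤ β * (n:ℝ) * Real.exp 1 / 2 := by positivity
            have := pow_le_pow_left₀ h0' h14 k
            nlinarith [pow_pos (show (0:ℝ) < 2 from by norm_num) n, this]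
  rw [hswap]
  have hsumT : Summable (fun k : ℕ => ∑ x, (β * (F x) ^ 2) ^ k / (Nat.factorial k : ℝ)) :=
    summable_sum fun x _ => hsummand x
  have hsumg : Summable (fun k : ℕ => (2 ^ n * 2 : ℝ) * (1/2) ^ k) :=
    (summable_geometric_of_lt_one (by norm_num) (by norm_num)).mul_left _
  calc ∑' k : ℕ, ∑ x, (β * (F x) ^ 2) ^ k / (Nat.factorial k : ℝ)
      ≤ ∑' k : ℕ, (2 ^ n * 2 : ℝ) * (1/2) ^ k := Summable.tsum_le_tsum hterm hsumT hsumg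
    _ = (2 ^ n * 2 : ℝ) * 2 := by
        rw [tsum_mul_left, tsum_geometric_of_lt_one (by norm_num) (by norm_num)]
        norm_num
    _ = 2 ^ n * 4 := by ring
lemma scalar0 {E n u : ℝ} (hE3 : E ≤ 3) (hnu : 0 ≤ n * u) (h : 1 ≤ 4 * E * n * u) :
    1 ≤ 12 * (n * u) := by nlinarith

lemma scalar1 {x L : ℝ} (hL : 0 ≤ L) (hx : 1 ≤ 12 * x) : 4 + (L + L) ≤ 50 * x * (1 + L) := by
  nlinarith [mul_nonneg hL (by linarith : (0:ℝ) ≤ 12 * x - 1)]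

lemma scalar2 {L m t n : ℝ} (hL : 0 ≤ L) (hm2 : m ^ 2 ≤ n * L / 2) (hn : 0 < n)
    (h12 : 1 ≤ 12 * (n * t ^ 2)) : t * m + L + t ^ 2 * n / 8 ≤ 100 * n * (1 + L) * t ^ 2 / 2 := by
  have h1 : 2 * n * (t * m) ≤ t ^ 2 * n ^ 2 + n * L / 2 := by
    nlinarith [sq_nonneg (t * n - m)]
  have htm : t * m ≤ t ^ 2 * n / 2 + L / 4 := by nlinarith [h1, hn]
  have hnt : (0:ℝ) ≤ n * t ^ 2 := by nlinarith [h12]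
  have hL12 : L ≤ 12 * (n * t ^ 2) * L := by
    nlinarith [mul_nonneg hL (by linarith : (0:ℝ) ≤ 12 * (n * t ^ 2) - 1)]
  nlinarith [htm, hL12, hnt, mul_nonneg hnt hL]

abbrev HC (n : ℕ) := Hamming (fun _ : Fin n => Bool)

lemma card_HC (n : ℕ) : Fintype.card (HC n) = 2 ^ n := by
  rw [Fintype.card_congr (Hamming.ofHamming (β := fun _ : Fin n => Bool))]
  simp [Fintype.card_fun]

lemma core (n : ℕ) (A : Set (HC n)) [Fintype A] (hA : A.Nonempty) (f : HC n → ℝ)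
    (hf : LipschitzOnWith 1 f A) (h0 : ∑ x ∈ A.toFinset, f x = 0) (t : ℝ) :
    ∑ x ∈ A.toFinset, Real.exp (t * f x) ≤
      (A.toFinset.card : ℝ) *
        Real.exp (100 * n * (1 + Real.log ((2:ℝ) ^ n / (A.toFinset.card : ℝ))) * t ^ 2 / 2) := by
  classical
  have hAfne : A.toFinset.Nonempty := by rwa [Set.toFinset_nonempty]
  -- the case n = 0
  rcases Nat.eq_zero_or_pos n with hn0 | hn
  · subst hn0
    obtain ⟨x₀, hx₀⟩ := hAfne
    have huniq : ∀ y z : HC 0, y = z := fun y z => funext fun i => i.elim0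
    have hAf : A.toFinset = {x₀} :=
      Finset.eq_singleton_iff_unique_mem.2 ⟨hx₀, fun y _ => huniq y x₀⟩
    rw [hAf] at h0 ⊢
    rw [Finset.sum_singleton] at h0
    rw [Finset.sum_singleton, h0, mul_zero, Real.exp_zero, Finset.card_singleton]
    have : (100:ℝ) * ((0:ℕ):ℝ) * (1 + Real.log ((2:ℝ) ^ (0:ℕ) / ((1:ℕ):ℝ))) * t ^ 2 / 2 = 0 := by
      norm_num
    rw [this, Real.exp_zero, Nat.cast_one, mul_one]
  -- main case
  set Af := A.toFinset with hAfdef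
  set a : ℝ := (Af.card : ℝ) with hadef
  have ha1 : 1 ≤ a := by
    rw [hadef]
    exact_mod_cast Finset.card_pos.2 hAfne
  have ha0 : 0 < a := lt_of_lt_of_le one_pos ha1
  have haN : a ≤ 2 ^ n := by
    have h1 : Af.card ≤ Fintype.card (HC n) := Finset.card_le_univ Af
    rw [card_HC] at h1
    rw [hadef]
    exact_mod_cast h1
  set L : ℝ := Real.log ((2:ℝ) ^ n / a) with hLdef
  have hL0 : 0 ≤ L := Real.log_nonneg (by rw [le_div_iff₀ ha0]; linarith)
  have hexpL : Real.exp L = (2:ℝ) ^ n / a := Real.exp_log (by positivity)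
  have hn0' : (0:ℝ) < n := by exact_mod_cast hn
  have hE3 : Real.exp 1 ≤ 3 := by linarith [Real.exp_one_lt_d9]
  have hE1 : (1:ℝ) < Real.exp 1 := by linarith [Real.exp_one_gt_d9]
  -- Lipschitz extension
  obtain ⟨F, hF, hEq⟩ := hf.extend_real
  have hFA : ∀ x ∈ Af, f x = F x := fun x hx => hEq (by rwa [hAfdef, Set.mem_toFinset] at hx)
  have h0F : ∑ x ∈ Af, F x = 0 := by
    rw [← h0]
    exact Finset.sum_congr rfl fun x hx => (hFA x hx).symm
  have htrans : ∀ φ : HC n → ℝ,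
      ∑ x : HC n, φ x = ∑ v : Fin n → Bool, φ (Hamming.toHamming v) :=
    fun φ => (Equiv.sum_comp (Hamming.toHamming) φ).symm
  have hlipF : ∀ x y : HC n, |F x - F y| ≤
      (hammingDist (Hamming.ofHamming x) (Hamming.ofHamming y) : ℝ) := by
    intro x y
    have h1 := hF.dist_le_mul x y
    rw [Hamming.dist_eq_hammingDist] at h1
    simpa [Real.dist_eq] using h1
  set m : ℝ := (∑ v : Fin n → Bool, F (Hamming.toHamming v)) / 2 ^ n with hmdef
  have hGlip : ∀ v w : Fin n → Bool,
      |F (Hamming.toHamming v) - m - (F (Hamming.toHamming w) - m)| ≤ (hammingDist v w : ℝ) := by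
    intro v w
    have h1 := hlipF (Hamming.toHamming v) (Hamming.toHamming w)
    rw [Hamming.ofHamming_toHamming, Hamming.ofHamming_toHamming] at h1
    have e : F (Hamming.toHamming v) - m - (F (Hamming.toHamming w) - m)
        = F (Hamming.toHamming v) - F (Hamming.toHamming w) := by ring
    rw [e]
    exact h1
  have hcard' : (Fintype.card (Fin n → Bool) : ℝ) = 2 ^ n := by simp [Fintype.card_fun]
  have hG0 : ∑ v : Fin n → Bool, (F (Hamming.toHamming v) - m) = 0 := by
    rw [Finset.sum_sub_distrib, Finset.sum_const, Finset.card_univ, nsmul_eq_mul, hcard', hmdef]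
    field_simp
    ring
  -- mean bound
  have hmb : ∀ s : ℝ, -(s * m) ≤ L + s ^ 2 * n / 8 := by
    intro s
    have hJ := convexOn_exp.map_sum_le (t := Af) (w := fun _ => 1/a)
      (p := fun x => s * (F x - m)) (fun i _ => by positivity)
      (by rw [Finset.sum_const, nsmul_eq_mul]; field_simp; exact hadef.symm) (fun i _ => Set.mem_univ _)
    simp only [smul_eq_mul] at hJ
    have hsum_in : ∑ x ∈ Af, (1/a) * (s * (F x - m)) = -(s * m) := by
      rw [← Finset.mul_sum]
      have e1 : ∑ x ∈ Af, (s * (F x - m)) = s * (∑ x ∈ Af, F x) - (Af.card : ℝ) * (s * m) := by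
        have e0 : ∀ x ∈ Af, s * (F x - m) = s * F x - s * m := fun x _ => by ring
        rw [Finset.sum_congr rfl e0, Finset.sum_sub_distrib, Finset.sum_const, nsmul_eq_mul,
          ← Finset.mul_sum]
      rw [e1, h0F, mul_zero, zero_sub, ← hadef]
      field_simp
    rw [hsum_in] at hJ
    have hres : ∑ x ∈ Af, (1/a) * Real.exp (s * (F x - m))
        ≤ (1/a) * ∑ x : HC n, Real.exp (s * (F x - m)) := by
      rw [← Finset.mul_sum]
      apply mul_le_mul_of_nonneg_left _ (by positivity)
      exact Finset.sum_le_sum_of_subset_of_nonneg (Finset.subset_univ _)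
        (fun _ _ _ => (Real.exp_pos _).le)
    have hcube : ∑ x : HC n, Real.exp (s * (F x - m))
        = ∑ v : Fin n → Bool, Real.exp (s * (F (Hamming.toHamming v) - m)) := htrans _
    have hmcd := mcdiarmid n (fun v => F (Hamming.toHamming v) - m) hGlip hG0 s
    have hfin : Real.exp (-(s * m)) ≤ Real.exp (L + s ^ 2 * n / 8) := by
      have h2 : (1/a) * (2 ^ n * Real.exp (s ^ 2 * n / 8))
          = Real.exp L * Real.exp (s ^ 2 * n / 8) := by
        rw [hexpL]
        field_simp
      calc Real.exp (-(s * m)) ≤ ∑ x ∈ Af, (1/a) * Real.exp (s * (F x - m)) := hJ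
        _ ≤ (1/a) * ∑ x : HC n, Real.exp (s * (F x - m)) := hres
        _ = (1/a) * ∑ v : Fin n → Bool, Real.exp (s * (F (Hamming.toHamming v) - m)) := by
            rw [hcube]
        _ ≤ (1/a) * (2 ^ n * Real.exp (s ^ 2 * n / 8)) := by
            apply mul_le_mul_of_nonneg_left hmcd (by positivity)
        _ = Real.exp L * Real.exp (s ^ 2 * n / 8) := h2
        _ = Real.exp (L + s ^ 2 * n / 8) := (Real.exp_add _ _).symm
    exact Real.exp_le_exp.1 hfin
  have hm2 : m ^ 2 ≤ n * L / 2 := by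
    have h1 := hmb (-(4 * m / (n:ℝ)))
    have e : -(-(4 * m / (n:ℝ)) * m) = 4 * m ^ 2 / (n:ℝ) := by
      field_simp
    rw [e] at h1
    have e2 : (-(4 * m / (n:ℝ))) ^ 2 * n / 8 = 2 * m ^ 2 / (n:ℝ) := by
      field_simp
      ring
    rw [e2] at h1
    have h2 := mul_le_mul_of_nonneg_right h1 hn0'.le
    rw [div_mul_cancel₀ _ hn0'.ne', add_mul, div_mul_cancel₀ _ hn0'.ne'] at h2
    nlinarith [h2]
  -- trivial case t = 0
  by_cases ht : t = 0
  · subst ht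
    simp only [zero_mul, Real.exp_zero]
    rw [Finset.sum_const, nsmul_eq_mul, mul_one]
    rw [show (0:ℝ) ^ 2 = 0 from by norm_num, mul_zero, zero_div, Real.exp_zero, mul_one]
  have ht2 : 0 < t ^ 2 := by positivity
  have hEne : Real.exp 1 ≠ 0 := (Real.exp_pos 1).ne'
  by_cases hreg : t ^ 2 ≤ 1 / (4 * Real.exp 1 * n)
  · -- small t regime
    obtain ⟨p, hp1, hpr, hpu⟩ : ∃ p : ℕ, 1 ≤ p ∧
        1 / (4 * Real.exp 1 * n * t ^ 2) ≤ (p:ℝ) ∧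
        (p:ℝ) ≤ 2 * (1 / (4 * Real.exp 1 * n * t ^ 2)) := by
      set r : ℝ := 1 / (4 * Real.exp 1 * n * t ^ 2) with hrdef
      have hr1 : 1 ≤ r := by
        rw [hrdef, le_div_iff₀ (by positivity), one_mul]
        calc 4 * Real.exp 1 * n * t ^ 2
            ≤ 4 * Real.exp 1 * n * (1 / (4 * Real.exp 1 * n)) := by gcongr
          _ = 1 := by field_simp
      refine ⟨⌈r⌉₊, Nat.one_le_ceil_iff.2 (by linarith), Nat.le_ceil r, ?_⟩
      have := Nat.ceil_lt_add_one (show (0:ℝ) ≤ r by linarith)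
      linarith
    have hp0 : (0:ℝ) < p := by exact_mod_cast hp1
    have hrt : (1 / (4 * Real.exp 1 * n * t ^ 2)) * t ^ 2 = 1 / (4 * Real.exp 1 * n) := by
      field_simp
    have hβn : (p:ℝ) * t ^ 2 * n * Real.exp 1 ≤ 1/2 := by
      have h1 : (p:ℝ) * t ^ 2 * n * Real.exp 1
          ≤ (2 * (1 / (4 * Real.exp 1 * n * t ^ 2))) * t ^ 2 * n * Real.exp 1 := by
        gcongr
      have h2 : (2 * (1 / (4 * Real.exp 1 * n * t ^ 2))) * t ^ 2 * n * Real.exp 1 = 1/2 := by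
        field_simp
        ring
      linarith
    have hGsq := exp_sq_bound hn (fun v => F (Hamming.toHamming v) - m) hGlip hG0
      (show (0:ℝ) ≤ (p:ℝ) * t ^ 2 by positivity) hβn
    -- step A
    have hS' : a ≤ ∑ x ∈ Af, Real.exp (-(t * f x)) := by
      have e : ∑ x ∈ Af, (1 + -(t * f x)) = a := by
        rw [Finset.sum_add_distrib, Finset.sum_const, nsmul_eq_mul, mul_one]
        have e2 : ∑ x ∈ Af, -(t * f x) = -t * ∑ x ∈ Af, f x := by
          rw [Finset.mul_sum]
          exact Finset.sum_congr rfl fun x _ => by ring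
        rw [e2, h0, mul_zero, add_zero, hadef]
      calc a = ∑ x ∈ Af, (1 + -(t * f x)) := e.symm
        _ ≤ ∑ x ∈ Af, Real.exp (-(t * f x)) :=
            Finset.sum_le_sum fun x _ => by linarith [Real.add_one_le_exp (-(t * f x))]
    -- step B, C
    have hBC : (∑ x ∈ Af, Real.exp (t * f x)) * (∑ y ∈ Af, Real.exp (-(t * f y)))
        ≤ ∑ x ∈ Af, ∑ y ∈ Af, Real.exp ((t * (f x - f y)) ^ 2 / 2) := by
      rw [Finset.sum_mul_sum]
      have step1 : ∑ x ∈ Af, ∑ y ∈ Af, Real.exp (t * f x) * Real.exp (-(t * f y))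
          = ∑ x ∈ Af, ∑ y ∈ Af, Real.exp (t * (f x - f y)) := by
        refine Finset.sum_congr rfl fun x _ => Finset.sum_congr rfl fun y _ => ?_
        rw [← Real.exp_add]
        congr 1
        ring
      have e2 : ∑ x ∈ Af, ∑ y ∈ Af, Real.exp (t * (f x - f y))
          = ∑ x ∈ Af, ∑ y ∈ Af, Real.exp (-(t * (f x - f y))) := by
        rw [Finset.sum_comm]
        refine Finset.sum_congr rfl fun x _ => Finset.sum_congr rfl fun y _ => ?_
        congr 1
        ring
      calc ∑ x ∈ Af, ∑ y ∈ Af, Real.exp (t * f x) * Real.exp (-(t * f y))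
          = ∑ x ∈ Af, ∑ y ∈ Af, Real.exp (t * (f x - f y)) := step1
        _ = (∑ x ∈ Af, ∑ y ∈ Af, Real.exp (t * (f x - f y))
              + ∑ x ∈ Af, ∑ y ∈ Af, Real.exp (-(t * (f x - f y)))) / 2 := by
            rw [← e2]
            ring
        _ = ∑ x ∈ Af, ∑ y ∈ Af,
              (Real.exp (t * (f x - f y)) + Real.exp (-(t * (f x - f y)))) / 2 := by
            rw [← Finset.sum_add_distrib, Finset.sum_div]
            refine Finset.sum_congr rfl fun x _ => ?_
            rw [← Finset.sum_add_distrib, Finset.sum_div]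
        _ ≤ ∑ x ∈ Af, ∑ y ∈ Af, Real.exp ((t * (f x - f y)) ^ 2 / 2) := by
            refine Finset.sum_le_sum fun x _ => Finset.sum_le_sum fun y _ => ?_
            have hc := Real.cosh_le_exp_half_sq (t * (f x - f y))
            rw [Real.cosh_eq] at hc
            exact hc
    -- step D : power mean
    obtain ⟨q, hq⟩ : ∃ q, p = q + 1 := ⟨p - 1, (Nat.succ_pred_eq_of_pos hp1).symm⟩
    have hps := pow_sum_div_card_le_sum_pow (s := Af ×ˢ Af)
      (f := fun z => Real.exp ((t * (f z.1 - f z.2)) ^ 2 / 2))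
      (fun i _ => (Real.exp_pos _).le) q
    rw [Finset.card_product] at hps
    have hccpos : (0:ℝ) < ((Af.card * Af.card : ℕ) : ℝ) := by
      have hcp := Finset.card_pos.2 hAfne
      exact_mod_cast Nat.mul_pos hcp hcp
    rw [div_le_iff₀ (pow_pos hccpos q)] at hps
    -- identify sums over product
    have hprodW : ∑ z ∈ Af ×ˢ Af, Real.exp ((t * (f z.1 - f z.2)) ^ 2 / 2)
        = ∑ x ∈ Af, ∑ y ∈ Af, Real.exp ((t * (f x - f y)) ^ 2 / 2) := by
      rw [Finset.sum_product]
    have hprodP : ∑ z ∈ Af ×ˢ Af, Real.exp ((t * (f z.1 - f z.2)) ^ 2 / 2) ^ (q+1)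
        = ∑ x ∈ Af, ∑ y ∈ Af, Real.exp ((t * (f x - f y)) ^ 2 / 2) ^ (q+1) := by
      rw [Finset.sum_product]
    rw [hprodW, hprodP] at hps
    -- bound the p-th powers
    have hzbound : ∀ x ∈ Af, ∀ y ∈ Af, Real.exp ((t * (f x - f y)) ^ 2 / 2) ^ (q+1)
        ≤ Real.exp (((p:ℝ) * t ^ 2) * (F x - m) ^ 2)
          * Real.exp (((p:ℝ) * t ^ 2) * (F y - m) ^ 2) := by
      intro x hx y hy
      rw [← Real.exp_nat_mul, ← Real.exp_add, ← hq]
      apply Real.exp_le_exp.2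
      rw [hFA x hx, hFA y hy]
      nlinarith [mul_nonneg hp0.le (sq_nonneg (t * ((F x - m) + (F y - m))))]
    have hDsum : ∑ x ∈ Af, ∑ y ∈ Af, Real.exp ((t * (f x - f y)) ^ 2 / 2) ^ (q+1)
        ≤ (2 ^ n * 4) ^ 2 := by
      have hsub : ∑ x ∈ Af, Real.exp (((p:ℝ) * t ^ 2) * (F x - m) ^ 2)
          ≤ ∑ x : HC n, Real.exp (((p:ℝ) * t ^ 2) * (F x - m) ^ 2) :=
        Finset.sum_le_sum_of_subset_of_nonneg (Finset.subset_univ _)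
          (fun _ _ _ => (Real.exp_pos _).le)
      have huniv : ∑ x : HC n, Real.exp (((p:ℝ) * t ^ 2) * (F x - m) ^ 2) ≤ 2 ^ n * 4 := by
        have hch := htrans (fun x => Real.exp (((p:ℝ) * t ^ 2) * (F x - m) ^ 2))
        rw [hch]
        exact hGsq
      have hAfnn : (0:ℝ) ≤ ∑ x ∈ Af, Real.exp (((p:ℝ) * t ^ 2) * (F x - m) ^ 2) :=
        Finset.sum_nonneg fun _ _ => (Real.exp_pos _).le
      calc ∑ x ∈ Af, ∑ y ∈ Af, Real.exp ((t * (f x - f y)) ^ 2 / 2) ^ (q+1)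
          ≤ ∑ x ∈ Af, ∑ y ∈ Af, Real.exp (((p:ℝ) * t ^ 2) * (F x - m) ^ 2)
              * Real.exp (((p:ℝ) * t ^ 2) * (F y - m) ^ 2) :=
            Finset.sum_le_sum fun x hx => Finset.sum_le_sum fun y hy => hzbound x hx y hy
        _ = (∑ x ∈ Af, Real.exp (((p:ℝ) * t ^ 2) * (F x - m) ^ 2))
            * (∑ y ∈ Af, Real.exp (((p:ℝ) * t ^ 2) * (F y - m) ^ 2)) :=
            (Finset.sum_mul_sum _ _ _ _).symm
        _ ≤ (2 ^ n * 4) * (2 ^ n * 4) := by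
            apply mul_le_mul (hsub.trans huniv) (hsub.trans huniv) hAfnn (by positivity)
        _ = (2 ^ n * 4) ^ 2 := (sq _).symm
    -- combine
    have hWpow : (∑ x ∈ Af, ∑ y ∈ Af, Real.exp ((t * (f x - f y)) ^ 2 / 2)) ^ (q+1)
        ≤ (2 ^ n * 4) ^ 2 * ((a * a) ^ q) := by
      calc (∑ x ∈ Af, ∑ y ∈ Af, Real.exp ((t * (f x - f y)) ^ 2 / 2)) ^ (q+1)
          ≤ (∑ x ∈ Af, ∑ y ∈ Af, Real.exp ((t * (f x - f y)) ^ 2 / 2) ^ (q+1))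
            * ((Af.card * Af.card : ℕ) : ℝ) ^ q := hps
        _ ≤ (2 ^ n * 4) ^ 2 * ((a * a) ^ q) := by
            have hcast : ((Af.card * Af.card : ℕ) : ℝ) = a * a := by
              push_cast [hadef]
              ring
            rw [hcast]
            apply mul_le_mul_of_nonneg_right hDsum (by positivity)
    -- exponent comparison
    have h4E : 1 ≤ 4 * Real.exp 1 * n * ((p:ℝ) * t ^ 2) := by
      have h1 : 1 / (4 * Real.exp 1 * n) ≤ (p:ℝ) * t ^ 2 := by
        rw [← hrt]
        apply mul_le_mul_of_nonneg_right hpr (sq_nonneg t)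
      have h2 := mul_le_mul_of_nonneg_left h1 (show (0:ℝ) ≤ 4 * Real.exp 1 * n by positivity)
      rwa [mul_one_div, div_self (by positivity)] at h2
    have hXgp : (16:ℝ) * (Real.exp L * Real.exp L)
        ≤ Real.exp ((p:ℝ) * (100 * n * (1 + L) * t ^ 2 / 2)) := by
      have h16 : (16:ℝ) ≤ Real.exp 4 := by
        have h2E : (2:ℝ) ≤ Real.exp 1 := by linarith [Real.exp_one_gt_d9]
        calc (16:ℝ) = 2 ^ (4:ℕ) := by norm_num
          _ ≤ Real.exp 1 ^ (4:ℕ) := pow_le_pow_left₀ (by norm_num) h2E 4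
          _ = Real.exp 4 := by
              rw [← Real.exp_nat_mul, mul_one]
              norm_num
      have hexpo : 4 + (L + L) ≤ (p:ℝ) * (100 * n * (1 + L) * t ^ 2 / 2) := by
        have hnn : (0:ℝ) ≤ (n:ℝ) * ((p:ℝ) * t ^ 2) := by positivity
        have h12 : 1 ≤ 12 * ((n:ℝ) * ((p:ℝ) * t ^ 2)) := scalar0 hE3 hnn h4E
        calc 4 + (L + L) ≤ 50 * ((n:ℝ) * ((p:ℝ) * t ^ 2)) * (1 + L) := scalar1 hL0 h12
          _ = (p:ℝ) * (100 * n * (1 + L) * t ^ 2 / 2) := by ring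
      calc (16:ℝ) * (Real.exp L * Real.exp L) ≤ Real.exp 4 * (Real.exp L * Real.exp L) := by
            apply mul_le_mul_of_nonneg_right h16 (by positivity)
        _ = Real.exp (4 + (L + L)) := by rw [Real.exp_add, Real.exp_add]
        _ ≤ _ := Real.exp_le_exp.2 hexpo
    have hWfin : ∑ x ∈ Af, ∑ y ∈ Af, Real.exp ((t * (f x - f y)) ^ 2 / 2)
        ≤ a * a * Real.exp (100 * n * (1 + L) * t ^ 2 / 2) := by
      have hbig : (∑ x ∈ Af, ∑ y ∈ Af, Real.exp ((t * (f x - f y)) ^ 2 / 2)) ^ (q+1)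
          ≤ (a * a * Real.exp (100 * n * (1 + L) * t ^ 2 / 2)) ^ (q+1) := by
        have h2n : (2:ℝ) ^ n = a * Real.exp L := by
          rw [hexpL]
          field_simp
        calc (∑ x ∈ Af, ∑ y ∈ Af, Real.exp ((t * (f x - f y)) ^ 2 / 2)) ^ (q+1)
            ≤ (2 ^ n * 4) ^ 2 * ((a * a) ^ q) := hWpow
          _ = (a * a) ^ q * (a * a * (16 * (Real.exp L * Real.exp L))) := by
              rw [h2n]
              ring
          _ ≤ (a * a) ^ q * (a * a * Real.exp ((p:ℝ) * (100 * n * (1 + L) * t ^ 2 / 2))) := by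
              apply mul_le_mul_of_nonneg_left _ (pow_nonneg (mul_nonneg ha0.le ha0.le) q)
              apply mul_le_mul_of_nonneg_left hXgp (mul_nonneg ha0.le ha0.le)
          _ = (a * a * Real.exp (100 * n * (1 + L) * t ^ 2 / 2)) ^ (q+1) := by
              rw [← hq, show ((p:ℝ) * (100 * n * (1 + L) * t ^ 2 / 2))
                  = (p:ℕ) * (100 * n * (1 + L) * t ^ 2 / 2) from rfl]
              rw [Real.exp_nat_mul, hq]
              ring
      exact le_of_pow_le_pow_left₀ (by omega) (by positivity) hbig
    -- conclude small regime
    have hSa : (∑ x ∈ Af, Real.exp (t * f x)) * a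
        ≤ a * a * Real.exp (100 * n * (1 + L) * t ^ 2 / 2) := by
      calc (∑ x ∈ Af, Real.exp (t * f x)) * a
          ≤ (∑ x ∈ Af, Real.exp (t * f x)) * (∑ y ∈ Af, Real.exp (-(t * f y))) := by
            apply mul_le_mul_of_nonneg_left hS'
              (Finset.sum_nonneg fun _ _ => (Real.exp_pos _).le)
        _ ≤ ∑ x ∈ Af, ∑ y ∈ Af, Real.exp ((t * (f x - f y)) ^ 2 / 2) := hBC
        _ ≤ a * a * Real.exp (100 * n * (1 + L) * t ^ 2 / 2) := hWfin
    have hfin2 : (∑ x ∈ Af, Real.exp (t * f x)) * a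
        ≤ (a * Real.exp (100 * n * (1 + L) * t ^ 2 / 2)) * a := by
      calc (∑ x ∈ Af, Real.exp (t * f x)) * a
          ≤ a * a * Real.exp (100 * n * (1 + L) * t ^ 2 / 2) := hSa
        _ = (a * Real.exp (100 * n * (1 + L) * t ^ 2 / 2)) * a := by ring
    exact le_of_mul_le_mul_right hfin2 ha0
  · -- large t regime
    push_neg at hreg
    have hS : ∑ x ∈ Af, Real.exp (t * f x)
        ≤ Real.exp (t * m) * (2 ^ n * Real.exp (t ^ 2 * n / 8)) := by
      calc ∑ x ∈ Af, Real.exp (t * f x) = ∑ x ∈ Af, Real.exp (t * F x) :=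
            Finset.sum_congr rfl fun x hx => by rw [hFA x hx]
        _ ≤ ∑ x : HC n, Real.exp (t * F x) :=
            Finset.sum_le_sum_of_subset_of_nonneg (Finset.subset_univ _)
              (fun _ _ _ => (Real.exp_pos _).le)
        _ = ∑ v : Fin n → Bool, Real.exp (t * F (Hamming.toHamming v)) := htrans _
        _ = Real.exp (t * m) * ∑ v : Fin n → Bool,
              Real.exp (t * (F (Hamming.toHamming v) - m)) := by
            rw [Finset.mul_sum]
            refine Finset.sum_congr rfl fun v _ => ?_
            rw [← Real.exp_add]
            congr 1
            ring
        _ ≤ Real.exp (t * m) * (2 ^ n * Real.exp (t ^ 2 * n / 8)) := by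
            apply mul_le_mul_of_nonneg_left _ (Real.exp_pos _).le
            exact mcdiarmid n (fun v => F (Hamming.toHamming v) - m) hGlip hG0 t
    have h2n : (2:ℝ) ^ n = a * Real.exp L := by
      rw [hexpL]
      field_simp
    have hexps : Real.exp (t * m) * (2 ^ n * Real.exp (t ^ 2 * n / 8))
        = a * Real.exp (t * m + L + t ^ 2 * n / 8) := by
      rw [h2n, Real.exp_add, Real.exp_add]
      ring
    have hexpineq : t * m + L + t ^ 2 * n / 8 ≤ 100 * n * (1 + L) * t ^ 2 / 2 := by
      have h4E : 1 ≤ 4 * Real.exp 1 * n * t ^ 2 := by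
        have h1 := mul_le_mul_of_nonneg_left hreg.le
          (show (0:ℝ) ≤ 4 * Real.exp 1 * n by positivity)
        rwa [mul_one_div, div_self (by positivity)] at h1
      have hnn : (0:ℝ) ≤ (n:ℝ) * t ^ 2 := by positivity
      have h12 : 1 ≤ 12 * ((n:ℝ) * t ^ 2) := scalar0 hE3 hnn h4E
      exact scalar2 hL0 hm2 hn0' h12
    calc ∑ x ∈ Af, Real.exp (t * f x)
        ≤ Real.exp (t * m) * (2 ^ n * Real.exp (t ^ 2 * n / 8)) := hS
      _ = a * Real.exp (t * m + L + t ^ 2 * n / 8) := hexps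
      _ ≤ a * Real.exp (100 * n * (1 + L) * t ^ 2 / 2) := by
          apply mul_le_mul_of_nonneg_left (Real.exp_le_exp.2 hexpineq) ha0.le
lemma measurableSet_HC {n : ℕ} (s : Set (HC n)) : MeasurableSet s :=
  MeasurableSpace.measurableSet_top

lemma measurableSet_sub {n : ℕ} {A : Set (HC n)} (s : Set A) : MeasurableSet s := by
  refine MeasurableSpace.measurableSet_comap.mpr ⟨Subtype.val '' s, measurableSet_HC _, ?_⟩
  exact Set.preimage_image_eq _ Subtype.val_injective

instance {n : ℕ} : MeasurableSingletonClass (HC n) := ⟨fun _ => measurableSet_HC _⟩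

instance {n : ℕ} (A : Set (HC n)) : MeasurableSingletonClass A := ⟨fun _ => measurableSet_sub _⟩

lemma uniformCube_apply {n : ℕ} (s : Set (HC n)) [Fintype s] :
    uniformCube n s = (s.toFinset.card : ℝ≥0∞) * ((2:ℝ≥0∞) ^ n)⁻¹ := by
  rw [uniformCube, Measure.smul_apply, smul_eq_mul,
    Measure.count_apply_finite _ s.toFinite, Set.toFinite_toFinset, card_HC, mul_comm]
  congr 1
  norm_cast

lemma uniformCube_toReal {n : ℕ} (s : Set (HC n)) [Fintype s] :
    (uniformCube n s).toReal = (s.toFinset.card : ℝ) / 2 ^ n := by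
  rw [uniformCube_apply, ENNReal.toReal_mul, ENNReal.toReal_inv, div_eq_mul_inv]
  simp

lemma two_pow_ne_zero {n : ℕ} : ((2:ℝ≥0∞) ^ n) ≠ 0 := by
  apply pow_ne_zero
  norm_num

lemma two_pow_ne_top {n : ℕ} : ((2:ℝ≥0∞) ^ n) ≠ ⊤ := by
  apply ENNReal.pow_ne_top
  norm_num

lemma uniformCube_A_ne_zero {n : ℕ} {A : Set (HC n)} [Fintype A] (hA : A.Nonempty) :
    uniformCube n A ≠ 0 := by
  rw [uniformCube_apply]
  apply mul_ne_zero
  · have h1 : 0 < A.toFinset.card := Finset.card_pos.2 (by rwa [Set.toFinset_nonempty])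
    exact_mod_cast h1.ne'
  · rw [ne_eq, ENNReal.inv_eq_zero]
    exact two_pow_ne_top

lemma uniformCube_A_ne_top {n : ℕ} {A : Set (HC n)} [Fintype A] :
    uniformCube n A ≠ ⊤ := by
  rw [uniformCube_apply]
  apply ENNReal.mul_ne_top
  · exact ENNReal.natCast_ne_top _
  · rw [ne_eq, ENNReal.inv_eq_top]
    exact two_pow_ne_zero

lemma restricted_singleton {n : ℕ} {A : Set (HC n)} [Fintype A] (hA : A.Nonempty) (x : A) :
    restrictedMeasure (uniformCube n) A {x} = ((A.toFinset.card : ℝ≥0∞))⁻¹ := by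
  rw [restrictedMeasure, Measure.comap_apply _ Subtype.val_injective
    (fun s _ => measurableSet_HC _) _ (measurableSet_sub _)]
  rw [Set.image_singleton, ProbabilityTheory.cond_apply (measurableSet_HC A)]
  have hxA : (x : HC n) ∈ A := x.2
  rw [Set.inter_eq_right.mpr (Set.singleton_subset_iff.mpr hxA)]
  have h1 : uniformCube n {(x : HC n)} = 1 * ((2:ℝ≥0∞) ^ n)⁻¹ := by
    rw [uniformCube_apply]
    congr 2
    rw [Set.toFinset_singleton, Finset.card_singleton, Nat.cast_one]
  rw [h1, uniformCube_apply, one_mul]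
  have hc0 : ((A.toFinset.card : ℝ≥0∞)) ≠ 0 := by
    have h2 : 0 < A.toFinset.card := Finset.card_pos.2 (by rwa [Set.toFinset_nonempty])
    exact_mod_cast h2.ne'
  rw [ENNReal.mul_inv (Or.inl hc0) (Or.inl (ENNReal.natCast_ne_top _)), inv_inv, mul_assoc,
    ENNReal.mul_inv_cancel two_pow_ne_zero two_pow_ne_top, mul_one]

lemma restricted_univ {n : ℕ} {A : Set (HC n)} [Fintype A] (hA : A.Nonempty) :
    restrictedMeasure (uniformCube n) A Set.univ = 1 := by
  rw [restrictedMeasure, Measure.comap_apply _ Subtype.val_injective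
    (fun s _ => measurableSet_HC _) _ (measurableSet_sub _)]
  rw [Set.image_univ, Subtype.range_coe, ProbabilityTheory.cond_apply (measurableSet_HC A),
    Set.inter_self]
  exact ENNReal.inv_mul_cancel (uniformCube_A_ne_zero hA) uniformCube_A_ne_top

lemma integral_restricted {n : ℕ} {A : Set (HC n)} [Fintype A] (hA : A.Nonempty) (g : A → ℝ) :
    ∫ x, g x ∂(restrictedMeasure (uniformCube n) A)
      = (A.toFinset.card : ℝ)⁻¹ * ∑ x : A, g x := by
  haveI : IsProbabilityMeasure (restrictedMeasure (uniformCube n) A) := ⟨restricted_univ hA⟩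
  rw [MeasureTheory.integral_fintype (MeasureTheory.Integrable.of_finite)]
  rw [Finset.mul_sum]
  refine Finset.sum_congr rfl fun x _ => ?_
  rw [Measure.real, restricted_singleton hA x, ENNReal.toReal_inv, smul_eq_mul]
  simp

end Cor54

/-- **Corollary 5.4.** There is a universal constant `c` (independent of `n` and `A`)
such that for any non-empty `A ⊂ {0,1}ⁿ`, the subgaussian constant of the normalized
restricted measure `μ_A` (w.r.t. the Hamming distance) satisfies
`σ²(μ_A) ≤ c·n·log(e/μ(A))`. -/
theorem hypercube_subgaussian_restricted :
    ∃ c : ℝ, 0 < c ∧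
      ∀ (n : ℕ) (A : Set (Hamming fun _ : Fin n => Bool)), A.Nonempty →
        subgaussianConst (restrictedMeasure (uniformCube n) A) ≤
          c * n * Real.log (Real.exp 1 / (uniformCube n A).toReal) := by
  classical
  refine ⟨100, by norm_num, ?_⟩
  intro n A hA
  haveI : Fintype A := Fintype.ofFinite _
  have hAfne : A.toFinset.Nonempty := by rwa [Set.toFinset_nonempty]
  have ha0' : 0 < A.toFinset.card := Finset.card_pos.2 hAfne
  have ha0 : (0:ℝ) < (A.toFinset.card : ℝ) := by exact_mod_cast ha0'
  have haN : (A.toFinset.card : ℝ) ≤ 2 ^ n := by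
    have h1 := Finset.card_le_univ A.toFinset
    rw [Cor54.card_HC] at h1
    exact_mod_cast h1
  have hL0 : 0 ≤ Real.log ((2:ℝ) ^ n / (A.toFinset.card : ℝ)) :=
    Real.log_nonneg (by rw [le_div_iff₀ ha0]; linarith)
  have hμ : (uniformCube n A).toReal = (A.toFinset.card : ℝ) / 2 ^ n :=
    Cor54.uniformCube_toReal A
  have hRHS : Real.log (Real.exp 1 / (uniformCube n A).toReal)
      = 1 + Real.log ((2:ℝ) ^ n / (A.toFinset.card : ℝ)) := by
    rw [hμ, Real.log_div (Real.exp_ne_zero 1)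
        (div_pos ha0 (by positivity : (0:ℝ) < 2 ^ n)).ne',
      Real.log_exp, Real.log_div ha0.ne' (by positivity : (0:ℝ) < 2 ^ n).ne',
      Real.log_div (by positivity : (0:ℝ) < 2 ^ n).ne' ha0.ne']
    ring
  rw [hRHS]
  have hsg : IsSubgaussianBound (restrictedMeasure (uniformCube n) A)
      (100 * (n:ℝ) * (1 + Real.log ((2:ℝ) ^ n / (A.toFinset.card : ℝ)))) := by
    constructor
    · have h1 : (0:ℝ) ≤ 1 + Real.log ((2:ℝ) ^ n / (A.toFinset.card : ℝ)) := by linarith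
      exact mul_nonneg (by positivity) h1
    · intro f hf hmean t
      obtain ⟨f₀, hf₀⟩ : ∃ f₀ : (Hamming fun _ : Fin n => Bool) → ℝ,
          ∀ (x : Hamming fun _ : Fin n => Bool) (hx : x ∈ A), f₀ x = f ⟨x, hx⟩ :=
        ⟨fun x => if h : x ∈ A then f ⟨x, h⟩ else 0, fun x hx => dif_pos hx⟩
      have hLip : LipschitzOnWith 1 f₀ A := by
        intro x hx y hy
        rw [hf₀ x hx, hf₀ y hy]
        exact hf ⟨x, hx⟩ ⟨y, hy⟩
      have hsum_eq : ∀ g : (Hamming fun _ : Fin n => Bool) → ℝ,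
          ∑ x ∈ A.toFinset, g x = ∑ x : A, g (x : Hamming fun _ : Fin n => Bool) :=
        fun g => Finset.sum_subtype A.toFinset (fun x => Set.mem_toFinset) g
      have hmean' : ∑ x : A, f x = 0 := by
        rw [Cor54.integral_restricted hA f] at hmean
        rcases mul_eq_zero.1 hmean with h | h
        · exact absurd h (inv_ne_zero ha0.ne')
        · exact h
      have h0f₀ : ∑ x ∈ A.toFinset, f₀ x = 0 := by
        rw [hsum_eq f₀, ← hmean']
        refine Finset.sum_congr rfl fun x _ => ?_
        rw [hf₀ (x : Hamming fun _ : Fin n => Bool) x.2, Subtype.coe_eta]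
      have hcore := Cor54.core n A hA f₀ hLip h0f₀ t
      rw [Cor54.integral_restricted hA]
      have hsum2 : ∑ x : A, Real.exp (t * f x)
          = ∑ x ∈ A.toFinset, Real.exp (t * f₀ x) := by
        rw [hsum_eq (fun x => Real.exp (t * f₀ x))]
        refine Finset.sum_congr rfl fun x _ => ?_
        rw [hf₀ (x : Hamming fun _ : Fin n => Bool) x.2, Subtype.coe_eta]
      rw [hsum2]
      calc ((A.toFinset.card : ℝ))⁻¹ * ∑ x ∈ A.toFinset, Real.exp (t * f₀ x)
          ≤ ((A.toFinset.card : ℝ))⁻¹ * ((A.toFinset.card : ℝ) *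
              Real.exp (100 * (n:ℝ) * (1 + Real.log ((2:ℝ) ^ n / (A.toFinset.card : ℝ)))
                * t ^ 2 / 2)) :=
            mul_le_mul_of_nonneg_left hcore (by positivity)
        _ = Real.exp (100 * (n:ℝ) * (1 + Real.log ((2:ℝ) ^ n / (A.toFinset.card : ℝ)))
              * t ^ 2 / 2) := by
            rw [← mul_assoc, inv_mul_cancel₀ ha0.ne', one_mul]
  exact csInf_le ⟨0, fun x hx => hx.1⟩ hsg
end

section
/- Let (M,d,μ) be a separable metric probability space with finite subgaussian constant σ²(μ). Equip the product space Mⁿ with the ℓ¹-type metric dₙ(x,y) = Σ_{i=1}^n d(xᵢ,yᵢ) and the product measure μⁿ. Then the subgaussian constant of (Mⁿ, dₙ, μⁿ) equals n times that of (M,d,μ): σ²(μⁿ) = n·σ²(μ). -/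
open MeasureTheory Real Filter

noncomputable instance piLpMeasurableSpace {n : ℕ} {M : Type*} [MeasurableSpace M] :
    MeasurableSpace (PiLp 1 fun _ : Fin n => M) :=
  MeasurableSpace.pi.comap WithLp.ofLp

/-- The product measure `μⁿ` on `Mⁿ`, the latter equipped with the ℓ¹-type metric
`dₙ(x,y) = Σᵢ d(xᵢ,yᵢ)` (realized as `PiLp 1`). -/
noncomputable def piMeasureL1 {M : Type*} [MeasurableSpace M] (μ : Measure M) (n : ℕ) :
    Measure (PiLp 1 fun _ : Fin n => M) :=
  (Measure.pi fun _ : Fin n => μ).map (WithLp.toLp 1)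

-- L0
lemma integral_sub_integral_zero {α : Type*} [MeasurableSpace α] (ν : Measure α)
    [IsProbabilityMeasure ν] (h : α → ℝ) :
    ∫ x, (h x - ∫ y, h y ∂ν) ∂ν = 0 := by
  by_cases hi : Integrable h ν
  · rw [integral_sub hi (integrable_const _), integral_const]
    simp
  · rw [integral_undef]
    intro hcon
    have := hcon.add (integrable_const (∫ y, h y ∂ν))
    exact hi (this.congr (Filter.Eventually.of_forall fun x => by simp))

-- f AEmeasurable from exp-integrability
lemma aemeas_of_exp {α : Type*} [MeasurableSpace α] {ν : Measure α} {f : α → ℝ} {t : ℝ}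
    (ht : t ≠ 0) (h : AEStronglyMeasurable (fun x => Real.exp (t * f x)) ν) :
    AEStronglyMeasurable f ν := by
  have h1 : AEMeasurable (fun x => t * f x) ν := by
    have h0 := Real.measurable_log.comp_aemeasurable h.aemeasurable
    refine h0.congr (Filter.Eventually.of_forall fun x => ?_)
    simp [Function.comp, Real.log_exp]
  have h2 : AEMeasurable f ν := by
    have := h1.const_mul t⁻¹
    refine this.congr (Filter.Eventually.of_forall fun x => ?_)
    field_simp
  exact h2.aestronglyMeasurable


lemma LipschitzWith.sub_const' {α : Type*} [PseudoMetricSpace α] {f : α → ℝ}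
    (h : LipschitzWith 1 f) (c : ℝ) : LipschitzWith 1 (fun x => f x - c) := by
  have h2 : LipschitzWith 1 (fun u : ℝ => u - c) :=
    LipschitzWith.of_dist_le_mul fun a b => by simp [Real.dist_eq]
  have h3 := h2.comp h
  rw [one_mul] at h3
  exact h3

section Trunc
-- truncation identity
lemma trunc_eq (a : ℝ) (k : ℝ) (hk : 0 ≤ k) :
    max (min a k) (-k) = min (max a 0) k - min (max (-a) 0) k := by
  simp only [max_def, min_def]
  split_ifs <;> linarith
end Trunc

/-- Reduction: to verify a subgaussian bound it suffices to test bounded Lipschitz functions. -/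
lemma isSubgaussianBound_of_bdd {α : Type*} [PseudoMetricSpace α] [MeasurableSpace α]
    (ν : Measure α) [IsProbabilityMeasure ν] {σ2 : ℝ} (h0 : 0 ≤ σ2)
    (H : ∀ (C : ℝ) (f : α → ℝ), LipschitzWith 1 f → (∀ x, |f x| ≤ C) →
      (∫ x, f x ∂ν) = 0 → ∀ t : ℝ, ∫ x, Real.exp (t * f x) ∂ν ≤ Real.exp (σ2 * t ^ 2 / 2)) :
    IsSubgaussianBound ν σ2 := by
  constructor
  · exact h0
  have key : ∀ f : α → ℝ, LipschitzWith 1 f → (∫ x, f x ∂ν) = 0 →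
      ∀ t : ℝ, 0 < t → ∫ x, Real.exp (t * f x) ∂ν ≤ Real.exp (σ2 * t ^ 2 / 2) := by
    intro f hlip hmean t ht
    by_cases hInt : Integrable (fun x => Real.exp (t * f x)) ν
    swap
    · rw [integral_undef hInt]; positivity
    have hfm : AEStronglyMeasurable f ν := aemeas_of_exp (ne_of_gt ht) hInt.aestronglyMeasurable
    set K := Real.exp (σ2 * t ^ 2 / 2) with hK
    have hKpos : 0 < K := Real.exp_pos _
    set fk : ℕ → α → ℝ := fun k x => max (min (f x) k) (-(k : ℝ)) with hfk
    have hfk_lip : ∀ k, LipschitzWith 1 (fk k) := fun k => (hlip.min_const _).max_const _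
    have hfk_bdd : ∀ (k : ℕ) (x : α), |fk k x| ≤ k := by
      intro k x
      rw [abs_le]
      refine ⟨le_max_right _ _, max_le (min_le_right _ _) (neg_le_self (Nat.cast_nonneg k))⟩
    have hfk_meas : ∀ k : ℕ, AEStronglyMeasurable (fk k) ν := by
      intro k
      exact ((hfm.aemeasurable.min aemeasurable_const).max aemeasurable_const).aestronglyMeasurable
    have hfk_int : ∀ k : ℕ, Integrable (fk k) ν := by
      intro k
      exact Integrable.mono' (integrable_const (k : ℝ)) (hfk_meas k)
        (Filter.Eventually.of_forall fun x => by simpa using hfk_bdd k x)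
    set c : ℕ → ℝ := fun k => ∫ x, fk k x ∂ν with hc
    -- per-truncation bound
    have hc_bound : ∀ k : ℕ, ∫ x, Real.exp (t * fk k x) ∂ν ≤ Real.exp (t * c k) * K := by
      intro k
      have hmz : ∫ x, (fk k x - c k) ∂ν = 0 := integral_sub_integral_zero ν (fk k)
      have hbd : ∀ x, |fk k x - c k| ≤ (k : ℝ) + |c k| := by
        intro x
        calc |fk k x - c k| ≤ |fk k x| + |c k| := abs_sub _ _
          _ ≤ (k : ℝ) + |c k| := by linarith [hfk_bdd k x]
      have := H ((k : ℝ) + |c k|) (fun x => fk k x - c k)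
        ((hfk_lip k).sub_const' _) hbd hmz t
      calc ∫ x, Real.exp (t * fk k x) ∂ν
          = ∫ x, Real.exp (t * c k) * Real.exp (t * (fk k x - c k)) ∂ν := by
            congr 1; funext x; rw [← Real.exp_add]; ring_nf
        _ = Real.exp (t * c k) * ∫ x, Real.exp (t * (fk k x - c k)) ∂ν :=
            integral_const_mul _ _
        _ ≤ Real.exp (t * c k) * K := by
            refine mul_le_mul_of_nonneg_left ?_ (le_of_lt (Real.exp_pos _))
            exact this
    -- pointwise convergence of truncations
    have hfk_le_abs : ∀ (k : ℕ) (x : α), |fk k x| ≤ |f x| := by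
      intro k x
      rw [abs_le]
      constructor
      · refine le_max_of_le_left (le_min (neg_abs_le _) ?_)
        exact le_trans (neg_nonpos.2 (abs_nonneg _)) (Nat.cast_nonneg k)
      · refine max_le (le_trans (min_le_left _ _) (le_abs_self _)) ?_
        exact le_trans (neg_nonpos.2 (Nat.cast_nonneg k)) (abs_nonneg _)
    have hpt : ∀ x, Tendsto (fun k : ℕ => Real.exp (t * fk k x)) atTop
        (nhds (Real.exp (t * f x))) := by
      intro x
      have hev : ∀ᶠ k : ℕ in atTop, Real.exp (t * fk k x) = Real.exp (t * f x) := by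
        filter_upwards [eventually_ge_atTop ⌈|f x|⌉₊] with k hk
        have h1 : |f x| ≤ (k : ℝ) := le_trans (Nat.le_ceil _) (by exact_mod_cast hk)
        have h2 : fk k x = f x := by
          show max (min (f x) (k : ℝ)) (-(k : ℝ)) = f x
          rw [min_eq_left (le_trans (le_abs_self _) h1),
            max_eq_left (le_trans (neg_le_neg h1) (neg_abs_le _))]
        rw [h2]
      exact Tendsto.congr' (hev.mono fun k hk => hk.symm) tendsto_const_nhds
    have hmeask : ∀ k : ℕ, AEMeasurable (fun x => ENNReal.ofReal (Real.exp (t * fk k x))) ν :=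
      fun k => ENNReal.measurable_ofReal.comp_aemeasurable
        (Real.measurable_exp.comp_aemeasurable ((hfk_meas k).aemeasurable.const_mul t))
    have fatou : ∫⁻ x, ENNReal.ofReal (Real.exp (t * f x)) ∂ν ≤
        Filter.liminf (fun k : ℕ => ∫⁻ x, ENNReal.ofReal (Real.exp (t * fk k x)) ∂ν) atTop := by
      have h1 : ∀ x, ENNReal.ofReal (Real.exp (t * f x)) =
          Filter.liminf (fun k : ℕ => ENNReal.ofReal (Real.exp (t * fk k x))) atTop := fun x =>
        ((ENNReal.continuous_ofReal.tendsto _).comp (hpt x)).liminf_eq.symm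
      calc ∫⁻ x, ENNReal.ofReal (Real.exp (t * f x)) ∂ν
          = ∫⁻ x, Filter.liminf (fun k : ℕ => ENNReal.ofReal (Real.exp (t * fk k x))) atTop ∂ν :=
            lintegral_congr h1
        _ ≤ _ := lintegral_liminf_le' hmeask
    have hint_k : ∀ k : ℕ, Integrable (fun x => Real.exp (t * fk k x)) ν := by
      intro k
      refine Integrable.mono' (integrable_const (Real.exp (t * k)))
        (Real.measurable_exp.comp_aemeasurable
          ((hfk_meas k).aemeasurable.const_mul t)).aestronglyMeasurable
        (Filter.Eventually.of_forall fun x => ?_)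
      rw [Real.norm_eq_abs, abs_of_pos (Real.exp_pos _), Real.exp_le_exp]
      have := hfk_bdd k x
      nlinarith [abs_le.1 this]
    have hboundk : ∀ k : ℕ, ∫⁻ x, ENNReal.ofReal (Real.exp (t * fk k x)) ∂ν ≤
        ENNReal.ofReal (Real.exp (t * c k) * K) := by
      intro k
      rw [← ofReal_integral_eq_lintegral_ofReal (hint_k k)
        (Filter.Eventually.of_forall fun x => (Real.exp_pos _).le)]
      exact ENNReal.ofReal_le_ofReal (hc_bound k)
    have hfreq : ∀ ε : ℝ, 0 < ε → ∃ᶠ k : ℕ in atTop, t * c k ≤ ε := by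
      intro ε hε
      by_cases hfi : Integrable f ν
      · have hck : Tendsto c atTop (nhds 0) := by
          have h1 := tendsto_integral_of_dominated_convergence (F := fk) (f := f)
            (bound := fun x => |f x|) (fun k => hfk_meas k) hfi.abs
            (fun k => Filter.Eventually.of_forall fun x => by
              simpa [Real.norm_eq_abs] using hfk_le_abs k x)
            (Filter.Eventually.of_forall fun x => by
              have hev : ∀ᶠ k : ℕ in atTop, fk k x = f x := by
                filter_upwards [eventually_ge_atTop ⌈|f x|⌉₊] with k hk
                have hx1 : |f x| ≤ (k : ℝ) := le_trans (Nat.le_ceil _) (by exact_mod_cast hk)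
                show max (min (f x) (k : ℝ)) (-(k : ℝ)) = f x
                rw [min_eq_left (le_trans (le_abs_self _) hx1),
                  max_eq_left (le_trans (neg_le_neg hx1) (neg_abs_le _))]
              exact Tendsto.congr' (hev.mono fun k hk => hk.symm) tendsto_const_nhds)
          rw [hmean] at h1
          exact h1
        have h2 : Tendsto (fun k => t * c k) atTop (nhds 0) := by
          simpa using hck.const_mul t
        exact ((h2.eventually_le_const hε)).frequently
      · have hfp_int : Integrable (fun x => max (f x) 0) ν := by
          refine Integrable.mono' (hInt.div_const t)
            (hfm.aemeasurable.max aemeasurable_const).aestronglyMeasurable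
            (Filter.Eventually.of_forall fun x => ?_)
          rw [Real.norm_eq_abs, abs_of_nonneg (le_max_right _ _)]
          rcases le_total (f x) 0 with h | h
          · rw [max_eq_right h]; positivity
          · rw [max_eq_left h, le_div_iff₀ ht]
            calc f x * t = t * f x := mul_comm _ _
              _ ≤ Real.exp (t * f x) := by linarith [Real.add_one_le_exp (t * f x)]
        set Kp := ∫ x, max (f x) 0 ∂ν with hKp
        have hneg_meas : AEStronglyMeasurable (fun x => max (-f x) 0) ν :=
          (hfm.aemeasurable.neg.max aemeasurable_const).aestronglyMeasurable
        have hmin_int : ∀ k : ℕ, Integrable (fun x => min (max (-f x) 0) k) ν := by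
          intro k
          refine Integrable.mono' (integrable_const (k : ℝ))
            ((hfm.aemeasurable.neg.max aemeasurable_const).min
              aemeasurable_const).aestronglyMeasurable
            (Filter.Eventually.of_forall fun x => ?_)
          rw [Real.norm_eq_abs, abs_of_nonneg (le_min (le_max_right _ _) (Nat.cast_nonneg k))]
          exact min_le_right _ _
        have hfn_not : ¬ Integrable (fun x => max (-f x) 0) ν := by
          intro hcon
          exact hfi ((hfp_int.sub hcon).congr (Filter.Eventually.of_forall fun x =>
            max_zero_sub_max_neg_zero_eq_self (f x)))
        have hub : ∃ k0 : ℕ, Kp < ∫ x, min (max (-f x) 0) k0 ∂ν := by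
          by_contra hcon
          push_neg at hcon
          apply hfn_not
          refine ⟨hneg_meas, ?_⟩
          rw [hasFiniteIntegral_iff_ofReal (Filter.Eventually.of_forall fun x =>
            (le_max_right (-f x) 0 : (0:ℝ) ≤ max (-f x) 0))]
          have hsup : ∀ x, ENNReal.ofReal (max (-f x) 0) =
              ⨆ k : ℕ, ENNReal.ofReal (min (max (-f x) 0) k) := by
            intro x
            apply le_antisymm
            · refine le_trans (le_of_eq ?_)
                (le_iSup (fun k : ℕ => ENNReal.ofReal (min (max (-f x) 0) k)) ⌈max (-f x) 0⌉₊)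
              rw [min_eq_left (Nat.le_ceil _)]
            · exact iSup_le fun k => ENNReal.ofReal_le_ofReal (min_le_left _ _)
          have hmono : Monotone fun (k : ℕ) (x : α) => ENNReal.ofReal (min (max (-f x) 0) k) := by
            intro k1 k2 hk x
            exact ENNReal.ofReal_le_ofReal (min_le_min le_rfl (by exact_mod_cast hk))
          calc ∫⁻ x, ENNReal.ofReal (max (-f x) 0) ∂ν
              = ∫⁻ x, ⨆ k : ℕ, ENNReal.ofReal (min (max (-f x) 0) k) ∂ν := lintegral_congr hsup
            _ = ⨆ k : ℕ, ∫⁻ x, ENNReal.ofReal (min (max (-f x) 0) k) ∂ν := by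
                refine lintegral_iSup' (fun k => ENNReal.measurable_ofReal.comp_aemeasurable
                  ((hfm.aemeasurable.neg.max aemeasurable_const).min aemeasurable_const))
                  (Filter.Eventually.of_forall fun x k1 k2 hk => ?_)
                exact ENNReal.ofReal_le_ofReal (min_le_min le_rfl (by exact_mod_cast hk))
            _ ≤ ENNReal.ofReal Kp := by
                refine iSup_le fun k => ?_
                rw [← ofReal_integral_eq_lintegral_ofReal (hmin_int k)
                  (Filter.Eventually.of_forall fun x =>
                    le_min (le_max_right _ _) (Nat.cast_nonneg k))]
                exact ENNReal.ofReal_le_ofReal (hcon k)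
            _ < ⊤ := ENNReal.ofReal_lt_top
        obtain ⟨k0, hk0⟩ := hub
        refine Filter.Eventually.frequently ?_
        filter_upwards [eventually_ge_atTop k0] with k hkk
        have hminp_int : Integrable (fun x => min (max (f x) 0) k) ν := by
          refine Integrable.mono' hfp_int
            ((hfm.aemeasurable.max aemeasurable_const).min
              aemeasurable_const).aestronglyMeasurable
            (Filter.Eventually.of_forall fun x => ?_)
          rw [Real.norm_eq_abs, abs_of_nonneg (le_min (le_max_right _ _) (Nat.cast_nonneg k))]
          exact min_le_left _ _
        have hmono2 : ∫ x, min (max (-f x) 0) (k0 : ℝ) ∂ν ≤ ∫ x, min (max (-f x) 0) (k : ℝ) ∂ν :=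
          integral_mono (hmin_int k0) (hmin_int k) fun x =>
            min_le_min le_rfl (by exact_mod_cast hkk : (k0 : ℝ) ≤ k)
        have hck : c k ≤ Kp - ∫ x, min (max (-f x) 0) (k : ℝ) ∂ν := by
          have hdecomp : ∀ x, fk k x = min (max (f x) 0) k - min (max (-f x) 0) k := fun x =>
            trunc_eq (f x) k (Nat.cast_nonneg k)
          have hc_eq : c k = ∫ x, (min (max (f x) 0) (k : ℝ) - min (max (-f x) 0) (k : ℝ)) ∂ν :=
            integral_congr_ae (Filter.Eventually.of_forall hdecomp)
          rw [hc_eq, integral_sub hminp_int (hmin_int k)]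
          have h3 : ∫ x, min (max (f x) 0) (k : ℝ) ∂ν ≤ Kp :=
            integral_mono hminp_int hfp_int fun x => min_le_left _ _
          linarith
        have hcneg : c k < 0 := by linarith
        have : t * c k ≤ 0 := mul_nonpos_iff.2 (Or.inl ⟨ht.le, hcneg.le⟩)
        linarith
    have hfinal : ∀ ε : ℝ, 0 < ε → ∫ x, Real.exp (t * f x) ∂ν ≤ Real.exp ε * K := by
      intro ε hε
      have h1 : ∫⁻ x, ENNReal.ofReal (Real.exp (t * f x)) ∂ν ≤
          ENNReal.ofReal (Real.exp ε * K) := by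
        refine fatou.trans (Filter.liminf_le_of_frequently_le' ?_)
        refine (hfreq ε hε).mono fun k hk => ?_
        refine (hboundk k).trans (ENNReal.ofReal_le_ofReal ?_)
        have hexp : Real.exp (t * c k) ≤ Real.exp ε := Real.exp_le_exp.2 hk
        nlinarith
      have h2 : ∫ x, Real.exp (t * f x) ∂ν =
          (∫⁻ x, ENNReal.ofReal (Real.exp (t * f x)) ∂ν).toReal := by
        rw [integral_eq_lintegral_of_nonneg_ae
          (Filter.Eventually.of_forall fun x => (Real.exp_pos _).le) hInt.aestronglyMeasurable]
      rw [h2]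
      calc (∫⁻ x, ENNReal.ofReal (Real.exp (t * f x)) ∂ν).toReal
          ≤ (ENNReal.ofReal (Real.exp ε * K)).toReal :=
            ENNReal.toReal_mono ENNReal.ofReal_ne_top h1
        _ = Real.exp ε * K := ENNReal.toReal_ofReal (by positivity)
    have htend : Tendsto (fun ε : ℝ => Real.exp ε * K) (nhdsWithin 0 (Set.Ioi 0)) (nhds K) := by
      have h1 : Tendsto (fun ε : ℝ => Real.exp ε * K) (nhds 0) (nhds (Real.exp 0 * K)) :=
        (Real.continuous_exp.tendsto 0).mul tendsto_const_nhds
      rw [Real.exp_zero, one_mul] at h1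
      exact h1.mono_left nhdsWithin_le_nhds
    exact ge_of_tendsto htend (eventually_nhdsWithin_of_forall fun ε hε => hfinal ε hε)
  refine fun f hlip hmean t => ?_
  rcases lt_trichotomy t 0 with htneg | rfl | htpos
  · have hlipneg : LipschitzWith 1 (fun x => -f x) := LipschitzWith.neg hlip
    have hmneg : ∫ x, -f x ∂ν = 0 := by rw [integral_neg, hmean, neg_zero]
    have := key _ hlipneg hmneg (-t) (by linarith)
    simpa [neg_mul_neg, neg_sq] using this
  · simp
  · exact key f hlip hmean t htpos


def piCons {M : Type*} {n : ℕ} (y : M) (z : PiLp 1 fun _ : Fin n => M) :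
    PiLp 1 fun _ : Fin (n + 1) => M :=
  WithLp.toLp 1 (Fin.cons y z.ofLp)

def piLpEquiv (M : Type*) [MeasurableSpace M] (n : ℕ) :
    (Fin n → M) ≃ᵐ PiLp 1 fun _ : Fin n => M where
  toFun := WithLp.toLp 1
  invFun := WithLp.ofLp
  left_inv := fun _ => rfl
  right_inv := fun _ => rfl
  measurable_toFun := by
    intro s hs
    obtain ⟨t, ht, rfl⟩ := hs
    exact ht
  measurable_invFun := fun s hs => ⟨s, hs, rfl⟩

lemma mpL {M : Type*} [MeasurableSpace M] (μ : Measure M) (n : ℕ) :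
    MeasurePreserving (piLpEquiv M n) (Measure.pi fun _ : Fin n => μ) (piMeasureL1 μ n) :=
  ⟨(piLpEquiv M n).measurable, rfl⟩

section PiLpInfra
set_option linter.unusedSectionVars false
variable {M : Type*} [MetricSpace M] [MeasurableSpace M]

lemma piLp_dist {n : ℕ} (x y : PiLp 1 fun _ : Fin n => M) :
    dist x y = ∑ i, dist (x i) (y i) := by
  rw [PiLp.dist_eq_sum (by norm_num : (0:ℝ) < (1 : ENNReal).toReal)]
  simp

lemma piLp_dist_cons {n : ℕ} (y y' : M) (z z' : PiLp 1 fun _ : Fin n => M) :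
    dist (show PiLp 1 fun _ : Fin (n + 1) => M from piCons y z)
      (show PiLp 1 fun _ : Fin (n + 1) => M from piCons y' z') = dist y y' + dist z z' := by
  rw [piLp_dist, piLp_dist, Fin.sum_univ_succ]
  simp [piCons]

instance piMeasureL1_prob (μ : Measure M) [IsProbabilityMeasure μ] (n : ℕ) :
    IsProbabilityMeasure (piMeasureL1 μ n) := by
  rw [← (mpL μ n).map_eq]
  exact Measure.isProbabilityMeasure_map (piLpEquiv M n).measurable.aemeasurable

noncomputable def consEquiv (n : ℕ) :
    M × (PiLp 1 fun _ : Fin n => M) ≃ᵐ PiLp 1 fun _ : Fin (n + 1) => M :=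
  ((MeasurableEquiv.prodCongr (MeasurableEquiv.refl M) (piLpEquiv M n).symm).trans
    (MeasurableEquiv.piFinSuccAbove (fun _ : Fin (n + 1) => M) 0).symm).trans
    (piLpEquiv M (n + 1))

lemma consEquiv_apply {n : ℕ} (p : M × (PiLp 1 fun _ : Fin n => M)) :
    consEquiv n p = piCons p.1 p.2 := by
  show WithLp.toLp 1 ((MeasurableEquiv.piFinSuccAbove (fun _ : Fin (n + 1) => M) 0).symm
    (p.1, p.2.ofLp)) = WithLp.toLp 1 (Fin.cons p.1 p.2.ofLp)
  congr 1
  simp [MeasurableEquiv.piFinSuccAbove, Fin.insertNthEquiv, Fin.insertNth_zero]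

lemma mpCons (μ : Measure M) [IsProbabilityMeasure μ] (n : ℕ) :
    MeasurePreserving (consEquiv n) (μ.prod (piMeasureL1 μ n)) (piMeasureL1 μ (n + 1)) := by
  have h1 : MeasurePreserving
      (MeasurableEquiv.prodCongr (MeasurableEquiv.refl M) (piLpEquiv M n).symm)
      (μ.prod (piMeasureL1 μ n)) (μ.prod (Measure.pi fun _ : Fin n => μ)) :=
    (MeasurePreserving.id μ).prod (MeasurePreserving.symm _ (mpL μ n))
  have h2 := MeasurePreserving.symm _
    (measurePreserving_piFinSuccAbove (fun _ : Fin (n + 1) => μ) 0)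
  exact (mpL μ (n + 1)).comp (h2.comp h1)

end PiLpInfra


lemma abs_int_le {α : Type*} [MeasurableSpace α] {ν : Measure α} (u : α → ℝ) :
    |∫ x, u x ∂ν| ≤ ∫ x, |u x| ∂ν := by
  simpa [Real.norm_eq_abs] using norm_integral_le_integral_norm (f := u) (μ := ν)

section Tensor
set_option linter.unusedSectionVars false
variable {M : Type*} [MetricSpace M] [MeasurableSpace M]

lemma tensorize (μ : Measure M) [IsProbabilityMeasure μ] {s : ℝ}
    (hs : IsSubgaussianBound μ s) :
    ∀ n : ℕ, IsSubgaussianBound (piMeasureL1 μ n) ((n : ℝ) * s) := by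
  intro n
  induction n with
  | zero =>
    constructor
    · simp
    intro f hlip hmean t
    have hx0 : ∀ x : PiLp 1 fun _ : Fin 0 => M, x = WithLp.toLp 1 (fun i => Fin.elim0 i) :=
      fun x => by cases x; congr 1; funext i; exact i.elim0
    have hfc : ∀ x, f x = f (WithLp.toLp 1 (fun i => Fin.elim0 i)) := fun x => by rw [← hx0 x]
    have hmean' : f (WithLp.toLp 1 (fun i => Fin.elim0 i)) = 0 := by
      have : ∫ x, f x ∂(piMeasureL1 μ 0) = f (WithLp.toLp 1 (fun i => Fin.elim0 i)) := by
        rw [integral_congr_ae (Filter.Eventually.of_forall hfc), integral_const]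
        simp
      rw [this] at hmean
      exact hmean
    have : ∀ x, Real.exp (t * f x) = 1 := fun x => by rw [hfc x, hmean']; simp
    rw [integral_congr_ae (Filter.Eventually.of_forall this), integral_const]
    simp
  | succ n IH =>
    have hs0 := hs.1
    refine isSubgaussianBound_of_bdd _ (by positivity) ?_
    intro C f hlip hbdd hmean t
    rcases eq_or_ne t 0 with rfl | ht0
    · simp
    by_cases hfae : AEStronglyMeasurable f (piMeasureL1 μ (n + 1))
    swap
    · rw [integral_undef]
      · positivity
      intro hcon
      exact hfae (aemeas_of_exp ht0 hcon.aestronglyMeasurable)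
    set ν := piMeasureL1 μ n with hν
    set e := (consEquiv (M := M) n).symm with he
    have mps : MeasurePreserving e.symm (μ.prod ν) (piMeasureL1 μ (n + 1)) := by
      rw [he, MeasurableEquiv.symm_symm]; exact mpCons μ n
    set h : M × (PiLp 1 fun _ : Fin n => M) → ℝ := fun p => f (piCons p.1 p.2) with hh
    have hsymm : ∀ p : M × (PiLp 1 fun _ : Fin n => M),
        (e.symm p : PiLp 1 fun _ : Fin (n + 1) => M) = piCons p.1 p.2 := by
      intro p
      exact consEquiv_apply p
    have hfaeh : AEStronglyMeasurable h (μ.prod ν) := by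
      have h1 := hfae.comp_quasiMeasurePreserving mps.quasiMeasurePreserving
      exact h1.congr (Filter.Eventually.of_forall fun p => by
        rw [Function.comp_apply, hsymm p])
    have hh_int : Integrable h (μ.prod ν) :=
      Integrable.mono' (integrable_const C) hfaeh
        (Filter.Eventually.of_forall fun p => by
          rw [Real.norm_eq_abs]; exact hbdd _)
    have hExpAE : AEStronglyMeasurable (fun p => Real.exp (t * h p)) (μ.prod ν) :=
      (Real.measurable_exp.comp_aemeasurable
        (hfaeh.aemeasurable.const_mul t)).aestronglyMeasurable
    have hExp_int : Integrable (fun p => Real.exp (t * h p)) (μ.prod ν) := by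
      refine Integrable.mono' (integrable_const (Real.exp (|t| * C))) hExpAE
        (Filter.Eventually.of_forall fun p => ?_)
      rw [Real.norm_eq_abs, abs_of_pos (Real.exp_pos _), Real.exp_le_exp]
      calc t * h p ≤ |t * h p| := le_abs_self _
        _ = |t| * |h p| := abs_mul _ _
        _ ≤ |t| * C := by
            have := hbdd (piCons p.1 p.2)
            exact mul_le_mul_of_nonneg_left this (abs_nonneg t)
    have hsec_lip : ∀ z : PiLp 1 fun _ : Fin n => M,
        LipschitzWith 1 fun y => f (piCons y z) := by
      intro z
      refine LipschitzWith.of_dist_le_mul fun y y' => ?_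
      calc dist (f (piCons y z)) (f (piCons y' z))
          ≤ 1 * dist (show PiLp 1 fun _ : Fin (n + 1) => M from piCons y z)
            (show PiLp 1 fun _ : Fin (n + 1) => M from piCons y' z) := hlip.dist_le_mul _ _
        _ = 1 * dist y y' := by rw [piLp_dist_cons]; simp
    set g : (PiLp 1 fun _ : Fin n => M) → ℝ := fun z => ∫ y, f (piCons y z) ∂μ with hg
    set A : Set (PiLp 1 fun _ : Fin n => M) :=
      {z | Integrable (fun y => f (piCons y z)) μ} with hA
    have hAae : ∀ᵐ z ∂ν, z ∈ A := hh_int.prod_left_ae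
    have hgA_bdd : ∀ z ∈ A, |g z| ≤ C := by
      intro z hz
      calc |g z| ≤ ∫ y, |f (piCons y z)| ∂μ := abs_int_le _
        _ ≤ ∫ _ : M, C ∂μ := integral_mono hz.abs (integrable_const C) fun y => hbdd _
        _ = C := by simp
    have hgA_lip : LipschitzOnWith 1 g A := by
      rw [lipschitzOnWith_iff_dist_le_mul]
      intro z hz z' hz'
      rw [Real.dist_eq]
      have hptw : ∀ y, |f (piCons y z) - f (piCons y z')| ≤ dist z z' := by
        intro y
        rw [← Real.dist_eq]
        calc dist (f (piCons y z)) (f (piCons y z'))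
            ≤ 1 * dist (show PiLp 1 fun _ : Fin (n + 1) => M from piCons y z)
              (show PiLp 1 fun _ : Fin (n + 1) => M from piCons y z') := hlip.dist_le_mul _ _
          _ = dist z z' := by rw [piLp_dist_cons]; simp
      calc |g z - g z'| = |∫ y, (f (piCons y z) - f (piCons y z')) ∂μ| := by
            rw [integral_sub hz hz']
        _ ≤ ∫ y, |f (piCons y z) - f (piCons y z')| ∂μ := abs_int_le _
        _ ≤ ∫ _ : M, dist z z' ∂μ := by
            refine integral_mono ((hz.sub hz').abs) (integrable_const _) hptw
        _ = dist z z' := by simp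
        _ ≤ 1 * dist z z' := by rw [one_mul]
    obtain ⟨G, hGlip, hGeq⟩ := hgA_lip.extend_real
    have hGg : G =ᵐ[ν] g := hAae.mono fun z hz => (hGeq hz).symm
    have hg_int : Integrable g ν := hh_int.integral_prod_right
    have hG_int : Integrable G ν := hg_int.congr hGg.symm
    have hprodpi : ∫ p, h p ∂(μ.prod ν) = ∫ x, f x ∂(piMeasureL1 μ (n + 1)) := by
      have h3 : ∫ p, f (e.symm p) ∂(μ.prod ν) = ∫ x, f x ∂(piMeasureL1 μ (n + 1)) :=
        mps.integral_comp' f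
      rw [← h3]
      exact integral_congr_ae (Filter.Eventually.of_forall fun p =>
        congrArg f (hsymm p).symm)
    have hGmean : ∫ z, G z ∂ν = 0 := by
      rw [integral_congr_ae hGg]
      have h1 := integral_prod_symm h hh_int
      have h2 : ∫ z, g z ∂ν = ∫ p, h p ∂(μ.prod ν) := h1.symm
      rw [h2, hprodpi, hmean]
    have hIH := IH.2 G hGlip hGmean t
    have hinner : ∀ z, ∫ y, Real.exp (t * f (piCons y z)) ∂μ ≤
        Real.exp (t * g z) * Real.exp (s * t ^ 2 / 2) := by
      intro z
      have hmz : ∫ y, (f (piCons y z) - g z) ∂μ = 0 := integral_sub_integral_zero μ _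
      have hlipz := (hsec_lip z).sub_const' (g z)
      have hb := hs.2 _ hlipz hmz t
      calc ∫ y, Real.exp (t * f (piCons y z)) ∂μ
          = ∫ y, Real.exp (t * g z) * Real.exp (t * (f (piCons y z) - g z)) ∂μ := by
            refine integral_congr_ae (Filter.Eventually.of_forall fun y => ?_)
            show Real.exp (t * f (piCons y z)) =
              Real.exp (t * g z) * Real.exp (t * (f (piCons y z) - g z))
            rw [show t * f (piCons y z) = t * g z + t * (f (piCons y z) - g z) by ring,
              Real.exp_add]
        _ = Real.exp (t * g z) * ∫ y, Real.exp (t * (f (piCons y z) - g z)) ∂μ :=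
            integral_const_mul _ _
        _ ≤ Real.exp (t * g z) * Real.exp (s * t ^ 2 / 2) :=
            mul_le_mul_of_nonneg_left hb (Real.exp_pos _).le
    have hsplit : ∫ x, Real.exp (t * f x) ∂(piMeasureL1 μ (n + 1)) =
        ∫ z, ∫ y, Real.exp (t * h (y, z)) ∂μ ∂ν := by
      have h3 : ∫ p, Real.exp (t * f (e.symm p)) ∂(μ.prod ν) =
          ∫ x, Real.exp (t * f x) ∂(piMeasureL1 μ (n + 1)) :=
        mps.integral_comp' (fun x => Real.exp (t * f x))
      rw [← h3]
      have h4 : ∫ p, Real.exp (t * f (e.symm p)) ∂(μ.prod ν) =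
          ∫ p, Real.exp (t * h p) ∂(μ.prod ν) :=
        integral_congr_ae (Filter.Eventually.of_forall fun p =>
          congrArg (fun u => Real.exp (t * u)) (congrArg f (hsymm p)))
      rw [h4]
      exact integral_prod_symm _ hExp_int
    have hmaj_int : Integrable (fun z => Real.exp (t * G z) * Real.exp (s * t ^ 2 / 2)) ν := by
      refine Integrable.mono'
        (integrable_const (Real.exp (|t| * C) * Real.exp (s * t ^ 2 / 2)))
        (((Real.measurable_exp.comp_aemeasurable
          (hG_int.aemeasurable.const_mul t)).aestronglyMeasurable).mul_const _) ?_
      filter_upwards [hAae] with z hz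
      rw [Real.norm_eq_abs, abs_of_pos (by positivity)]
      have h5 : Real.exp (t * G z) ≤ Real.exp (|t| * C) := by
        rw [Real.exp_le_exp]
        calc t * G z ≤ |t * G z| := le_abs_self _
          _ = |t| * |G z| := abs_mul _ _
          _ ≤ |t| * C := by
              rw [← hGeq hz]
              exact mul_le_mul_of_nonneg_left (hgA_bdd z hz) (abs_nonneg t)
      exact mul_le_mul_of_nonneg_right h5 (Real.exp_pos _).le
    have hmono : ∫ z, ∫ y, Real.exp (t * h (y, z)) ∂μ ∂ν ≤
        ∫ z, Real.exp (t * G z) * Real.exp (s * t ^ 2 / 2) ∂ν := by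
      refine integral_mono_of_nonneg
        (Filter.Eventually.of_forall fun z => integral_nonneg fun y => (Real.exp_pos _).le)
        hmaj_int ?_
      filter_upwards [hAae] with z hz
      have h6 := hinner z
      rw [hGeq hz] at h6
      exact h6
    have hfin : ∫ z, Real.exp (t * G z) * Real.exp (s * t ^ 2 / 2) ∂ν ≤
        Real.exp ((n : ℝ) * s * t ^ 2 / 2) * Real.exp (s * t ^ 2 / 2) := by
      rw [integral_mul_const]
      exact mul_le_mul_of_nonneg_right hIH (Real.exp_pos _).le
    calc ∫ x, Real.exp (t * f x) ∂(piMeasureL1 μ (n + 1))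
        = ∫ z, ∫ y, Real.exp (t * h (y, z)) ∂μ ∂ν := hsplit
      _ ≤ ∫ z, Real.exp (t * G z) * Real.exp (s * t ^ 2 / 2) ∂ν := hmono
      _ ≤ Real.exp ((n : ℝ) * s * t ^ 2 / 2) * Real.exp (s * t ^ 2 / 2) := hfin
      _ = Real.exp ((n + 1 : ℕ) * s * t ^ 2 / 2) := by
          rw [← Real.exp_add]
          congr 1
          push_cast
          ring
end Tensor

section Lower
set_option linter.unusedSectionVars false
variable {M : Type*} [MetricSpace M] [MeasurableSpace M]

lemma measurePreserving_eval_pi {n : ℕ} (μ : Measure M) [IsProbabilityMeasure μ] (i : Fin n) :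
    MeasurePreserving (fun z : PiLp 1 fun _ : Fin n => M => z i) (piMeasureL1 μ n) μ :=
  (measurePreserving_eval (fun _ : Fin n => μ) i).comp (MeasurePreserving.symm _ (mpL μ n))

lemma integral_eval_pi {n : ℕ} (μ : Measure M) [IsProbabilityMeasure μ] (i : Fin n)
    (u : M → ℝ) (hu : AEStronglyMeasurable u μ) :
    ∫ z, u (z i) ∂(piMeasureL1 μ n) = ∫ y, u y ∂μ := by
  have mp := measurePreserving_eval_pi μ i
  have h2 : ∫ y, u y ∂(Measure.map (fun z : PiLp 1 fun _ : Fin n => M => z i) (piMeasureL1 μ n)) =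
      ∫ z, u (z i) ∂(piMeasureL1 μ n) :=
    integral_map mp.measurable.aemeasurable (by rw [mp.map_eq]; exact hu)
  rw [mp.map_eq] at h2
  exact h2.symm

lemma integral_pi_prod_pow {n : ℕ} (μ : Measure M) [IsProbabilityMeasure μ] (u : M → ℝ) :
    ∫ z, ∏ i : Fin n, u (z i) ∂(piMeasureL1 μ n) = (∫ y, u y ∂μ) ^ n := by
  induction n with
  | zero =>
    simp only [Finset.univ_eq_empty, Finset.prod_empty, pow_zero]
    rw [integral_const]
    simp
  | succ n IH =>
    set ν := piMeasureL1 μ n with hν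
    set e := (consEquiv (M := M) n).symm with he
    have mps : MeasurePreserving e.symm (μ.prod ν) (piMeasureL1 μ (n + 1)) := by
      rw [he, MeasurableEquiv.symm_symm]; exact mpCons μ n
    have hsymm : ∀ p : M × (PiLp 1 fun _ : Fin n => M),
        (e.symm p : PiLp 1 fun _ : Fin (n + 1) => M) = piCons p.1 p.2 := by
      intro p
      exact consEquiv_apply p
    have h3 : ∫ p, ∏ i : Fin (n + 1), u ((e.symm p) i) ∂(μ.prod ν) =
        ∫ x, ∏ i : Fin (n + 1), u (x i) ∂(piMeasureL1 μ (n + 1)) :=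
      mps.integral_comp' (fun x => ∏ i : Fin (n + 1), u (x i))
    rw [← h3]
    have h4 : ∀ p : M × (PiLp 1 fun _ : Fin n => M),
        ∏ i : Fin (n + 1), u ((e.symm p) i) = u p.1 * ∏ j : Fin n, u (p.2 j) := by
      intro p
      rw [hsymm p, Fin.prod_univ_succ]
      simp [piCons]
    rw [integral_congr_ae (Filter.Eventually.of_forall h4)]
    calc ∫ a, u a.1 * ∏ j : Fin n, u (a.2 j) ∂(μ.prod ν)
        = (∫ y, u y ∂μ) * ∫ w, ∏ j : Fin n, u (w j) ∂ν :=
          integral_prod_mul u (fun w : PiLp 1 fun _ : Fin n => M => ∏ j : Fin n, u (w j))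
      _ = (∫ y, u y ∂μ) ^ (n + 1) := by rw [IH, pow_succ]; ring

lemma lower_bound {n : ℕ} (hn : 0 < n) (μ : Measure M) [IsProbabilityMeasure μ] {σ2n : ℝ}
    (hb : IsSubgaussianBound (piMeasureL1 μ n) σ2n) :
    IsSubgaussianBound μ (σ2n / n) := by
  have hn' : (0 : ℝ) < n := by exact_mod_cast hn
  refine isSubgaussianBound_of_bdd μ (div_nonneg hb.1 hn'.le) ?_
  intro C f hlip hbdd hmean t
  rcases eq_or_ne t 0 with rfl | ht0
  · simp
  by_cases hfae : AEStronglyMeasurable f μ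
  swap
  · rw [integral_undef]
    · positivity
    intro hcon
    exact hfae (aemeas_of_exp ht0 hcon.aestronglyMeasurable)
  have hexpae : AEStronglyMeasurable (fun y => Real.exp (t * f y)) μ :=
    (Real.measurable_exp.comp_aemeasurable (hfae.aemeasurable.const_mul t)).aestronglyMeasurable
  have hexp_int : Integrable (fun y => Real.exp (t * f y)) μ := by
    refine Integrable.mono' (integrable_const (Real.exp (|t| * C))) hexpae
      (Filter.Eventually.of_forall fun y => ?_)
    rw [Real.norm_eq_abs, abs_of_pos (Real.exp_pos _), Real.exp_le_exp]
    calc t * f y ≤ |t * f y| := le_abs_self _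
      _ = |t| * |f y| := abs_mul _ _
      _ ≤ |t| * C := mul_le_mul_of_nonneg_left (hbdd y) (abs_nonneg t)
  set F : (PiLp 1 fun _ : Fin n => M) → ℝ := fun z => ∑ i, f (z i) with hF
  have hFlip : LipschitzWith 1 F := by
    refine LipschitzWith.of_dist_le_mul fun z z' => ?_
    simp only [NNReal.coe_one, one_mul]
    rw [Real.dist_eq, piLp_dist]
    calc |F z - F z'| = |∑ i, (f (z i) - f (z' i))| := by rw [← Finset.sum_sub_distrib]
      _ ≤ ∑ i, |f (z i) - f (z' i)| := Finset.abs_sum_le_sum_abs _ _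
      _ ≤ ∑ i, dist (z i) (z' i) := by
          refine Finset.sum_le_sum fun i _ => ?_
          rw [← Real.dist_eq]
          simpa using hlip.dist_le_mul (z i) (z' i)
  have hfint : Integrable f μ :=
    Integrable.mono' (integrable_const C) hfae
      (Filter.Eventually.of_forall fun y => by rw [Real.norm_eq_abs]; exact hbdd y)
  have hcomp_int : ∀ i : Fin n, Integrable (fun z => f (z i)) (piMeasureL1 μ n) := fun i =>
    ((measurePreserving_eval_pi μ i).integrable_comp hfae).mpr hfint
  have hFmean : ∫ z, F z ∂(piMeasureL1 μ n) = 0 := by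
    rw [hF]
    rw [integral_finset_sum _ fun i _ => hcomp_int i]
    have : ∀ i : Fin n, ∫ z, f (z i) ∂(piMeasureL1 μ n) = 0 := fun i => by
      rw [integral_eval_pi μ i f hfae, hmean]
    simp [this]
  have hFb := hb.2 F hFlip hFmean t
  have hprod : ∫ z, Real.exp (t * F z) ∂(piMeasureL1 μ n) =
      (∫ y, Real.exp (t * f y) ∂μ) ^ n := by
    have h5 : ∀ z, Real.exp (t * F z) = ∏ i : Fin n, Real.exp (t * f (z i)) := fun z => by
      rw [hF, Finset.mul_sum, Real.exp_sum]
    rw [integral_congr_ae (Filter.Eventually.of_forall h5),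
      integral_pi_prod_pow μ (fun y => Real.exp (t * f y))]
  set I := ∫ y, Real.exp (t * f y) ∂μ with hI
  have hIpos : 0 < I := by
    have h6 : ∫ _ : M, Real.exp (-(|t| * C)) ∂μ ≤ I := by
      refine integral_mono (integrable_const _) hexp_int fun y => ?_
      rw [Real.exp_le_exp]
      calc -(|t| * C) ≤ -(|t| * |f y|) := by
            have := mul_le_mul_of_nonneg_left (hbdd y) (abs_nonneg t)
            linarith
        _ = -|t * f y| := by rw [abs_mul]
        _ ≤ t * f y := neg_abs_le _
    calc (0 : ℝ) < Real.exp (-(|t| * C)) := Real.exp_pos _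
      _ = ∫ _ : M, Real.exp (-(|t| * C)) ∂μ := by rw [integral_const]; simp
      _ ≤ I := h6
  have hIn : I ^ n ≤ Real.exp (σ2n * t ^ 2 / 2) := by rw [← hprod]; exact hFb
  have hlog : (n : ℝ) * Real.log I ≤ σ2n * t ^ 2 / 2 := by
    have h7 := Real.log_le_log (by positivity) hIn
    rw [Real.log_pow, Real.log_exp] at h7
    exact_mod_cast h7
  have h8 : Real.log I ≤ σ2n / n * t ^ 2 / 2 := by
    rw [show σ2n / (n : ℝ) * t ^ 2 / 2 = σ2n * t ^ 2 / 2 / n by ring, le_div_iff₀ hn']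
    linarith
  calc I = Real.exp (Real.log I) := (Real.exp_log hIpos).symm
    _ ≤ Real.exp (σ2n / n * t ^ 2 / 2) := Real.exp_le_exp.2 h8

end Lower

/-- **Proposition 5.5.** For a separable metric probability space `(M,d,μ)` with finite
subgaussian constant, the subgaussian constant of `(Mⁿ, dₙ, μⁿ)` with the ℓ¹-type
metric `dₙ` satisfies `σ²(μⁿ) = n·σ²(μ)`. -/
theorem subgaussian_const_product {M : Type*} [MetricSpace M]
    [TopologicalSpace.SeparableSpace M] [MeasurableSpace M]
    (μ : Measure M) [IsProbabilityMeasure μ]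
    (hfin : ∃ σ2 : ℝ, IsSubgaussianBound μ σ2) (n : ℕ) :
    subgaussianConst (piMeasureL1 μ n) = n * subgaussianConst μ := by
  obtain ⟨s₀, hs₀⟩ := hfin
  have hSne : {σ2 : ℝ | IsSubgaussianBound μ σ2}.Nonempty := ⟨s₀, hs₀⟩
  have hSbdd : BddBelow {σ2 : ℝ | IsSubgaussianBound μ σ2} := ⟨0, fun x hx => hx.1⟩
  have hSnbdd : BddBelow {σ2 : ℝ | IsSubgaussianBound (piMeasureL1 μ n) σ2} :=
    ⟨0, fun x hx => hx.1⟩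
  have hSnne : {σ2 : ℝ | IsSubgaussianBound (piMeasureL1 μ n) σ2}.Nonempty :=
    ⟨(n : ℝ) * s₀, tensorize μ hs₀ n⟩
  rcases Nat.eq_zero_or_pos n with rfl | hn
  · have h0 : IsSubgaussianBound (piMeasureL1 μ 0) 0 := by
      have := tensorize μ hs₀ 0
      simpa using this
    rw [subgaussianConst, subgaussianConst]
    simp only [Nat.cast_zero, zero_mul]
    apply le_antisymm
    · exact csInf_le hSnbdd h0
    · exact le_csInf hSnne fun x hx => hx.1
  · have hn' : (0 : ℝ) < n := by exact_mod_cast hn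
    rw [subgaussianConst, subgaussianConst]
    apply le_antisymm
    · have h2 : sInf {σ2 : ℝ | IsSubgaussianBound (piMeasureL1 μ n) σ2} / n ≤
          sInf {σ2 : ℝ | IsSubgaussianBound μ σ2} := by
        refine le_csInf hSne fun s hs => ?_
        rw [div_le_iff₀ hn']
        have h1 : sInf {σ2 : ℝ | IsSubgaussianBound (piMeasureL1 μ n) σ2} ≤ (n : ℝ) * s :=
          csInf_le hSnbdd (tensorize μ hs n)
        linarith
      calc sInf {σ2 : ℝ | IsSubgaussianBound (piMeasureL1 μ n) σ2}
          = (n : ℝ) * (sInf {σ2 : ℝ | IsSubgaussianBound (piMeasureL1 μ n) σ2} / n) := by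
            field_simp
        _ ≤ (n : ℝ) * sInf {σ2 : ℝ | IsSubgaussianBound μ σ2} :=
            mul_le_mul_of_nonneg_left h2 hn'.le
    · refine le_csInf hSnne fun s hsn => ?_
      have h1 : sInf {σ2 : ℝ | IsSubgaussianBound μ σ2} ≤ s / n :=
        csInf_le hSbdd (lower_bound hn μ hsn)
      rw [le_div_iff₀ hn'] at h1
      linarith
end

section
/- Let f : ℝⁿ → ℝ be a convex function. For any L > 0, there exists a convex function g : ℝⁿ → ℝ such that g = f on the set A = {x ∈ ℝⁿ : |∇f(x)| ≤ L} and g is L-Lipschitz on all of ℝⁿ (i.e., |g(x) − g(y)| ≤ L|x − y| for all x, y). -/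
open MeasureTheory Real Filter

/-- The generalized modulus of the gradient
`|∇f(x)| = limsup_{y → x} |f(x) − f(y)|/d(x,y)`. -/
noncomputable def gradMod {M : Type*} [PseudoMetricSpace M] (f : M → ℝ) (x : M) : ℝ :=
  Filter.limsup (fun y => |f x - f y| / dist x y) (nhdsWithin x {x}ᶜ)

lemma key_lemma {n : ℕ} {f : EuclideanSpace ℝ (Fin n) → ℝ}
    (hf : ConvexOn ℝ Set.univ f) {L : ℝ} {a : EuclideanSpace ℝ (Fin n)}
    (ha : gradMod f a ≤ L) (y : EuclideanSpace ℝ (Fin n)) :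
    f a - L * dist a y ≤ f y := by
  rcases eq_or_ne y a with rfl | hy
  · simp
  haveI : Nontrivial (EuclideanSpace ℝ (Fin n)) := ⟨⟨y, a, hy⟩⟩
  have hd : (0:ℝ) < dist a y := dist_pos.mpr (Ne.symm hy)
  set d := dist a y with hdd
  refine le_of_forall_pos_le_add fun ε hε => ?_
  set ε' := ε / d with hε'
  have hε'pos : 0 < ε' := div_pos hε hd
  have hbdd : IsBoundedUnder (· ≤ ·) (nhdsWithin a {a}ᶜ)
      (fun z => |f a - f z| / dist a z) := by
    obtain ⟨K, t, ht, hK⟩ := (hf.locallyLipschitzOn isOpen_univ) (Set.mem_univ a)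
    rw [nhdsWithin_univ] at ht
    refine ⟨(K : ℝ), ?_⟩
    rw [Filter.eventually_map]
    have hmem : ∀ᶠ z in nhdsWithin a {a}ᶜ, z ∈ t :=
      Filter.Eventually.filter_mono nhdsWithin_le_nhds ht
    have hne : ∀ᶠ z in nhdsWithin a {a}ᶜ, z ≠ a := by
      filter_upwards [self_mem_nhdsWithin] with z hz
      exact hz
    filter_upwards [hmem, hne] with z hzt hza
    have hat : a ∈ t := mem_of_mem_nhds ht
    have hdpos : (0:ℝ) < dist a z := dist_pos.mpr (Ne.symm hza)
    have h1 : |f a - f z| ≤ K * dist a z := by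
      have := hK.dist_le_mul a hat z hzt
      rwa [Real.dist_eq] at this
    rw [div_le_iff₀ hdpos]
    exact h1
  have hev : ∀ᶠ z in nhdsWithin a {a}ᶜ, |f a - f z| / dist a z < L + ε' :=
    eventually_lt_of_limsup_lt (lt_of_le_of_lt ha (by linarith)) hbdd
  rw [eventually_iff, Metric.mem_nhdsWithin_iff] at hev
  obtain ⟨δ, hδ, hball⟩ := hev
  set t : ℝ := min (δ / (2 * d)) (1 / 2) with ht
  have ht0 : 0 < t := lt_min (by positivity) (by norm_num)
  have ht1 : t < 1 := lt_of_le_of_lt (min_le_right _ _) (by norm_num)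
  set z : EuclideanSpace ℝ (Fin n) := a + t • (y - a) with hz
  have hdz : dist a z = t * d := by
    rw [dist_comm, hz, dist_eq_norm]
    simp [norm_smul, abs_of_pos ht0, hdd, dist_eq_norm, norm_sub_rev]
  have hzne : z ≠ a := by
    intro h
    rw [hz] at h
    have : t • (y - a) = 0 := by
      have := congrArg (· - a) h
      simpa [add_sub_cancel_left] using this
    rcases smul_eq_zero.mp this with h1 | h2
    · exact ht0.ne' h1
    · exact hy (sub_eq_zero.mp h2)
  have hzball : z ∈ Metric.ball a δ := by
    rw [Metric.mem_ball, dist_comm, hdz]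
    calc t * d ≤ (δ / (2 * d)) * d := by
          apply mul_le_mul_of_nonneg_right (min_le_left _ _) hd.le
      _ = δ / 2 := by field_simp
      _ < δ := by linarith
  have hb := hball ⟨hzball, hzne⟩
  have hb' : f a - f z ≤ (L + ε') * (t * d) := by
    rw [Set.mem_setOf_eq] at hb
    have h1 : |f a - f z| / dist a z < L + ε' := hb
    rw [hdz] at h1
    have htd : (0:ℝ) < t * d := by positivity
    have := (div_lt_iff₀ htd).mp h1
    calc f a - f z ≤ |f a - f z| := le_abs_self _
      _ ≤ (L + ε') * (t * d) := this.le
  -- convexity: z = (1-t) • a + t • y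
  have hzc : z = (1 - t) • a + t • y := by
    rw [hz]; module
  have hconv : f z ≤ (1 - t) * f a + t * f y := by
    rw [hzc]
    exact hf.2 (Set.mem_univ a) (Set.mem_univ y) (by linarith) ht0.le (by ring)
  have hεd : ε' * d = ε := by rw [hε', div_mul_cancel₀ ε hd.ne']
  nlinarith [hb', hconv, ht0, hd]

/-- **Lemma 6.2.** For a convex function `f` on `ℝⁿ` and any `L > 0`, there exists a
convex function `g` on `ℝⁿ` with `g = f` on the set `A = {x : |∇f(x)| ≤ L}` and `g`
`L`-Lipschitz on all of `ℝⁿ` (Euclidean norm). -/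
theorem convex_lipschitz_extension (n : ℕ) (f : EuclideanSpace ℝ (Fin n) → ℝ)
    (hf : ConvexOn ℝ Set.univ f) (L : ℝ) (hL : 0 < L) :
    ∃ g : EuclideanSpace ℝ (Fin n) → ℝ, ConvexOn ℝ Set.univ g ∧
      (∀ x ∈ {x : EuclideanSpace ℝ (Fin n) | gradMod f x ≤ L}, g x = f x) ∧
      LipschitzWith (Real.toNNReal L) g := by
  by_cases hA : ∃ a, gradMod f a ≤ L
  swap
  · refine ⟨fun _ => 0, convexOn_const 0 convex_univ, ?_, ?_⟩
    · intro x hx; exact absurd ⟨x, hx⟩ hA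
    · exact (LipschitzWith.const 0).weaken zero_le
  obtain ⟨a, ha⟩ := hA
  set g : EuclideanSpace ℝ (Fin n) → ℝ := fun x => ⨅ y, f y + L * dist x y with hg
  have hbdd : ∀ x, BddBelow (Set.range fun y => f y + L * dist x y) := by
    intro x
    refine ⟨f a - L * dist a x, ?_⟩
    rintro _ ⟨y, rfl⟩
    have h1 := key_lemma hf ha y
    have h2 : dist a y ≤ dist a x + dist x y := dist_triangle a x y
    simp only
    nlinarith [mul_le_mul_of_nonneg_left h2 hL.le]
  have hgle : ∀ x y, g x ≤ f y + L * dist x y := fun x y => ciInf_le (hbdd x) y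
  refine ⟨g, ?_, ?_, ?_⟩
  · -- convexity
    refine ⟨convex_univ, ?_⟩
    intro x₁ _ x₂ _ s t hs ht hst
    rcases eq_or_lt_of_le hs with hs0 | hs
    · have : t = 1 := by linarith
      simp [← hs0, this]
    rcases eq_or_lt_of_le ht with ht0 | ht
    · have : s = 1 := by linarith
      simp [← ht0, this]
    have key : ∀ y₁ y₂, g (s • x₁ + t • x₂) ≤
        s * (f y₁ + L * dist x₁ y₁) + t * (f y₂ + L * dist x₂ y₂) := by
      intro y₁ y₂
      have h1 := hgle (s • x₁ + t • x₂) (s • y₁ + t • y₂)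
      have h2 : f (s • y₁ + t • y₂) ≤ s * f y₁ + t * f y₂ :=
        hf.2 (Set.mem_univ y₁) (Set.mem_univ y₂) hs.le ht.le hst
      have h3 : dist (s • x₁ + t • x₂) (s • y₁ + t • y₂) ≤
          s * dist x₁ y₁ + t * dist x₂ y₂ := by
        rw [dist_eq_norm]
        have : (s • x₁ + t • x₂) - (s • y₁ + t • y₂) = s • (x₁ - y₁) + t • (x₂ - y₂) := by
          module
        rw [this]
        calc ‖s • (x₁ - y₁) + t • (x₂ - y₂)‖ ≤ ‖s • (x₁ - y₁)‖ + ‖t • (x₂ - y₂)‖ :=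
              norm_add_le _ _
          _ = s * dist x₁ y₁ + t * dist x₂ y₂ := by
              simp [norm_smul, abs_of_pos hs, abs_of_pos ht, dist_eq_norm]
      nlinarith
    have step1 : ∀ y₁, g (s • x₁ + t • x₂) - s * (f y₁ + L * dist x₁ y₁) ≤ t * g x₂ := by
      intro y₁
      rw [hg]
      have : t * ⨅ y, f y + L * dist x₂ y = ⨅ y, t * (f y + L * dist x₂ y) :=
        Real.mul_iInf_of_nonneg ht.le _
      rw [this]
      refine le_ciInf fun y₂ => ?_
      have := key y₁ y₂
      linarith
    have step2 : g (s • x₁ + t • x₂) - t * g x₂ ≤ s * g x₁ := by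
      have : s * g x₁ = ⨅ y, s * (f y + L * dist x₁ y) := by
        rw [hg]; exact Real.mul_iInf_of_nonneg hs.le _
      rw [this]
      refine le_ciInf fun y₁ => ?_
      have := step1 y₁
      linarith
    simp only [smul_eq_mul]
    linarith
  · -- g = f on A
    intro x hx
    refine le_antisymm (by simpa using hgle x x) ?_
    refine le_ciInf fun y => ?_
    have := key_lemma hf hx y
    linarith
  · -- Lipschitz
    refine LipschitzWith.of_dist_le_mul fun x x' => ?_
    have habs : ∀ u v : EuclideanSpace ℝ (Fin n), g u - g v ≤ L * dist u v := by
      intro u v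
      have : g u - L * dist u v ≤ ⨅ y, f y + L * dist v y := by
        refine le_ciInf fun y => ?_
        have h1 := hgle u y
        have h2 : dist u y ≤ dist u v + dist v y := dist_triangle u v y
        nlinarith
      have h3 : g u - L * dist u v ≤ g v := this
      linarith
    rw [Real.dist_eq, Real.coe_toNNReal _ hL.le]
    rw [abs_sub_le_iff]
    constructor
    · exact habs x x'
    · rw [dist_comm]; exact habs x' x
end
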